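/- arXiv:0905.2665 — 2 statements merged into one kernel-verified Lean document; each statement's English description precedes it below -/
import Mathlib

section
/- In Kleene's K₂ (functions ℕ → ℕ with the standard interrogation application), define E₀ = ⟨⟩ and E_{n+1} = ⟨E_n⟩ (codes of sequences), and B = { α ∈ ℕ^ℕ : α(E_n) = n for all n }. Then: (1) if α ∈ B and αβ is defined in K₂, then αβ ∈ B; (2) B contains elements k', s' satisfying the pca axioms (k) and (s) for B; hence B is a sub-pca of K₂ that is not closed under 'recursive in' (not downwards closed w.r.t. Turing reducibility). -/
open Classical

noncomputable section

namespace OostenK2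

universe u

/-! ### Finite partial functions -/

/-- Finite partial functions `A ⇀ A`, as finite functional graphs,
ordered by inclusion of graphs. -/
abbrev FPF (A : Type u) : Type u :=
  {p : Set (A × A) // (∀ ⦃a b b'⦄, (a, b) ∈ p → (a, b') ∈ p → b = b') ∧ p.Finite}

variable {A : Type u}

/-- The domain of a finite partial function. -/
def FPF.dom (p : FPF A) : Set A := Prod.fst '' p.val

/-- The empty finite partial function (the root of sequential trees). -/
def FPF.empty (A : Type u) : FPF A :=
  ⟨∅, fun _ _ _ h => absurd h (Set.notMem_empty _), Set.finite_empty⟩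

/-- A total function `α` extends the finite partial function `p`. -/
def agrees (α : A → A) (p : FPF A) : Prop := ∀ ⦃a b⦄, (a, b) ∈ p.val → α a = b

/-- A partial function `β` extends the finite partial function `p`. -/
def agreesP (β : A → Option A) (p : FPF A) : Prop :=
  ∀ ⦃a b⦄, (a, b) ∈ p.val → β a = some b

/-- Two finite partial functions are compatible if their union is a function. -/
def compatFPF (s t : FPF A) : Prop :=
  ∀ ⦃a b b'⦄, (a, b) ∈ s.val → (a, b') ∈ t.val → b = b'

/-! ### Trees -/

section Trees

variable {X : Type*} [PartialOrder X]

/-- A leaf of `T`: an element of `T` with no strict extension in `T`. -/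
def IsLeaf (T : Set X) (p : X) : Prop := p ∈ T ∧ ¬∃ q ∈ T, p < q

/-- `q` is an immediate successor of `p` in `T`. -/
def ImmSucc (T : Set X) (p q : X) : Prop :=
  q ∈ T ∧ p < q ∧ ¬∃ t ∈ T, p < t ∧ t < q

/-- `T` is a tree with root `root`: the root belongs to `T`, lies below every
element, and the predecessors of any element form a chain. -/
def IsTreeOn (root : X) (T : Set X) : Prop :=
  root ∈ T ∧ (∀ p ∈ T, root ≤ p) ∧ ∀ p ∈ T, IsChain (· ≤ ·) {t | t ∈ T ∧ t ≤ p}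

/-- A tree is well-founded iff it has no infinite strictly increasing path. -/
def WellFoundedTree (T : Set X) : Prop :=
  ¬∃ f : ℕ → X, (∀ n, f n ∈ T) ∧ StrictMono f

end Trees

/-- A sequential tree: a tree of finite partial functions, rooted at the empty
function, in which all immediate successors of a non-leaf `p` have domain
`dom p ∪ {a}` for a single `a ∉ dom p`. -/
def IsSeqTree (T : Set (FPF A)) : Prop :=
  IsTreeOn (FPF.empty A) T ∧
  ∀ p ∈ T, ¬IsLeaf T p →
    ∃ a ∉ FPF.dom p, ∀ q, ImmSucc T p q → FPF.dom q = insert a (FPF.dom p)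

/-- A total sequential tree: the immediate successors of a non-leaf `p` are
*all* extensions of `p` with domain `dom p ∪ {a}`. -/
def IsTotalSeqTree (T : Set (FPF A)) : Prop :=
  IsTreeOn (FPF.empty A) T ∧
  ∀ p ∈ T, ¬IsLeaf T p →
    ∃ a ∉ FPF.dom p,
      ∀ q : FPF A, ImmSucc T p q ↔ p < q ∧ FPF.dom q = insert a (FPF.dom p)

/-- `Φ` (as a relation `(A → A) → A → Prop`) is a partial sequential function:
`Φ α = b` iff the path of `α` through some total sequential tree `T` ends in a
leaf `v` with `F v = b`. -/
def SeqRel (Φ : (A → A) → A → Prop) : Prop :=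
  ∃ (T : Set (FPF A)) (F : FPF A → A), IsTotalSeqTree T ∧
    ∀ α b, Φ α b ↔ ∃ v, IsLeaf T v ∧ agrees α v ∧ F v = b

/-- A total bisequential tree: pairs of finite partial functions ordered by
pairwise inclusion; at every non-leaf, either the first or the second component
is interrogated at a single new argument, with all possible answers present. -/
def IsTotalBiTree (T : Set (FPF A × FPF A)) : Prop :=
  IsTreeOn (FPF.empty A, FPF.empty A) T ∧
  ∀ p ∈ T, ¬IsLeaf T p →
    (∃ a ∉ FPF.dom p.1, ∀ q : FPF A × FPF A,
        ImmSucc T p q ↔ q.2 = p.2 ∧ p.1 ≤ q.1 ∧ FPF.dom q.1 = insert a (FPF.dom p.1)) ∨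
    (∃ b ∉ FPF.dom p.2, ∀ q : FPF A × FPF A,
        ImmSucc T p q ↔ q.1 = p.1 ∧ p.2 ≤ q.2 ∧ FPF.dom q.2 = insert b (FPF.dom p.2))

/-- `G` is a total bisequential function. -/
def BiSeqTotal (G : (A → A) → (A → A) → A) : Prop :=
  ∃ (T : Set (FPF A × FPF A)) (F : FPF A × FPF A → A), IsTotalBiTree T ∧
    ∀ α β, ∃ v, IsLeaf T v ∧ agrees α v.1 ∧ agrees β v.2 ∧ G α β = F v

/-! ### Interrogations (total functions)

Throughout, `mk : List A → A` is an injective coding of finite sequences,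
`qp b` is the code `⟨q,b⟩` of a query and `rp c` the code `⟨r,c⟩` of a result. -/

/-- `L` is an interrogation of `β` by `α`. -/
def Interrog (mk : List A → A) (qp : A → A) (α β : A → A) (L : List A) : Prop :=
  ∀ j (hj : j < L.length), ∃ b, α (mk (L.take j)) = qp b ∧ β b = L[j]'hj

/-- `φ_α(β) = c` via interrogations. -/
def phiRel (mk : List A → A) (qp rp : A → A) (α β : A → A) (c : A) : Prop :=
  ∃ L, Interrog mk qp α β L ∧ α (mk L) = rp c

/-- `L` is an `a`-interrogation of `β` by `α`. -/
def AInterrog (mk : List A → A) (qp : A → A) (a : A) (α β : A → A) (L : List A) : Prop :=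
  ∀ j (hj : j < L.length), ∃ b, α (mk (a :: L.take j)) = qp b ∧ β b = L[j]'hj

/-- `φ^a(α,β) = c` via `a`-interrogations. -/
def phiA (mk : List A → A) (qp rp : A → A) (a : A) (α β : A → A) (c : A) : Prop :=
  ∃ L, AInterrog mk qp a α β L ∧ α (mk (a :: L)) = rp c

/-- The application of `K₂(A)`: `αβ` is defined with value `γ` iff
`φ^a(α,β) = γ a` for every `a`. -/
def AppRel (mk : List A → A) (qp rp : A → A) (α β γ : A → A) : Prop :=
  ∀ a, phiA mk qp rp a α β (γ a)

/-! ### Partial combinatory algebras (abstractly) -/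

/-- A set with a partial binary application. -/
structure PCAStruct (X : Type*) where
  app : X → X → Part X

/-- Extension of the application to `Part`; `Part`-equality is Kleene equality. -/
def pap {X : Type*} (S : PCAStruct X) (u v : Part X) : Part X :=
  u.bind fun a => v.bind fun b => S.app a b

/-- `S` is a partial combinatory algebra: there are `k`, `s` with
`kxy = x` (everywhere defined), `sxy` defined, and `sxyz ≃ (xz)(yz)`. -/
def IsPCA {X : Type*} (S : PCAStruct X) : Prop :=
  ∃ k s : X,
    (∀ x y : X, pap S (S.app k x) (Part.some y) = Part.some x) ∧
    (∀ x y : X, (pap S (S.app s x) (Part.some y)).Dom) ∧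
    (∀ x y z : X,
      pap S (pap S (S.app s x) (Part.some y)) (Part.some z)
        = pap S (S.app x z) (S.app y z))

/-- `t`, `f` are Booleans of `S`: distinct, with a definition-by-cases combinator. -/
def IsBooleans {X : Type*} (S : PCAStruct X) (t f : X) : Prop :=
  t ≠ f ∧ ∃ C : X, ∀ a b : X,
    pap S (pap S (S.app C t) (Part.some a)) (Part.some b) = Part.some a ∧
    pap S (pap S (S.app C f) (Part.some a)) (Part.some b) = Part.some b

/-- Applicative morphism `γ : S → T`: a total relation such that some realizer
`r` tracks application. -/
def IsAppMor {X Y : Type*} (S : PCAStruct X) (T : PCAStruct Y) (γ : X → Set Y) : Prop :=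
  (∀ x, (γ x).Nonempty) ∧
  ∃ r : Y, ∀ x x' z : X, z ∈ S.app x x' → ∀ b ∈ γ x, ∀ b' ∈ γ x',
    ∃ w, w ∈ pap T (T.app r b) (Part.some b') ∧ w ∈ γ z

/-- The preorder on applicative morphisms. -/
def morLE {X Y : Type*} (T : PCAStruct Y) (γ γ' : X → Set Y) : Prop :=
  ∃ s : Y, ∀ x : X, ∀ b ∈ γ x, ∃ c, c ∈ T.app s b ∧ c ∈ γ' x

def morEquiv {X Y : Type*} (T : PCAStruct Y) (γ γ' : X → Set Y) : Prop :=
  morLE T γ γ' ∧ morLE T γ' γ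

/-- Composition of applicative morphisms (as total relations). -/
def morComp {X Y Z : Type*} (γ : X → Set Y) (ε : Y → Set Z) : X → Set Z :=
  fun x => ⋃ y ∈ γ x, ε y

/-- Decidability of a morphism w.r.t. chosen Booleans. -/
def IsDecidableMor {X Y : Type*} (T : PCAStruct Y) (γ : X → Set Y)
    (tX fX : X) (tY fY : Y) : Prop :=
  ∃ d : Y, (∀ b ∈ γ tX, T.app d b = Part.some tY) ∧
    (∀ b ∈ γ fX, T.app d b = Part.some fY)

/-- `rf` represents the partial function `f : X ⇀ X` w.r.t. `γ`. -/
def RepresentsPFun {X Y : Type*} (T : PCAStruct Y) (γ : X → Set Y)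
    (f : X → Option X) (rf : Y) : Prop :=
  ∀ a x, f a = some x → ∀ b ∈ γ a, ∃ c, c ∈ T.app rf b ∧ c ∈ γ x

/-- The pca `K₂(A)` on `A^A` (application via `a`-interrogations). -/
def K2 (mk : List A → A) (qp rp : A → A) : PCAStruct (A → A) where
  app α β := ⟨∀ a, ∃ c, phiA mk qp rp a α β c, fun h a => (h a).choose⟩

/-! ### Interrogations for partial functions -/

/-- Interrogation of a partial `β` by a partial `α`. -/
def PInterrog (mk : List A → A) (qp : A → A) (α β : A → Option A) (L : List A) : Prop :=
  ∀ j (hj : j < L.length), ∃ b, α (mk (L.take j)) = some (qp b) ∧ β b = some (L[j]'hj)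

/-- `φ_α(β) = c` for partial functions. -/
def phiPRel (mk : List A → A) (qp rp : A → A) (α β : A → Option A) (c : A) : Prop :=
  ∃ L, PInterrog mk qp α β L ∧ α (mk L) = some (rp c)

/-- `a`-interrogation of a partial `β` by a partial `α`. -/
def PAInterrog (mk : List A → A) (qp : A → A) (a : A) (α β : A → Option A)
    (L : List A) : Prop :=
  ∀ j (hj : j < L.length), ∃ b, α (mk (a :: L.take j)) = some (qp b) ∧ β b = some (L[j]'hj)

/-- `φ^a(α,β) = c` for partial functions. -/
def phiPA (mk : List A → A) (qp rp : A → A) (a : A) (α β : A → Option A) (c : A) : Prop :=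
  ∃ L, PAInterrog mk qp a α β L ∧ α (mk (a :: L)) = some (rp c)

/-- The (total!) application of `K₂^p(A)` on partial functions. -/
def K2pApp (mk : List A → A) (qp rp : A → A) (α β : A → Option A) : A → Option A :=
  fun a => if h : ∃ c, phiPA mk qp rp a α β c then some h.choose else none

/-- `K₂^p(A)` as a `PCAStruct` (with everywhere-defined application). -/
def K2p (mk : List A → A) (qp rp : A → A) : PCAStruct (A → Option A) :=
  ⟨fun α β => Part.some (K2pApp mk qp rp α β)⟩

/-! ### A pca with standard structure (Booleans, pairing, tuple coding, recursion) -/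

/-- A pca together with the standard derived structure: Booleans with a case
combinator, pairing, an injective standard tuple coding with combinators
manipulating it, and a fixed-point combinator. All of these exist in any
(nontrivial) pca. -/
structure StdPCA (A : Type u) where
  S : PCAStruct A
  isPCA : IsPCA S
  t : A
  f : A
  t_ne_f : t ≠ f
  Cc : A
  C_t : ∀ a b : A, pap S (pap S (S.app Cc t) (Part.some a)) (Part.some b) = Part.some a
  C_f : ∀ a b : A, pap S (pap S (S.app Cc f) (Part.some a)) (Part.some b) = Part.some b
  pairF : A → A → A
  Pc : A
  P0 : A
  P1 : A
  P_spec : ∀ x y : A, pap S (S.app Pc x) (Part.some y) = Part.some (pairF x y)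
  P0_spec : ∀ x y : A, S.app P0 (pairF x y) = Part.some x
  P1_spec : ∀ x y : A, S.app P1 (pairF x y) = Part.some y
  tup : List A → A
  tup_inj : Function.Injective tup
  CONS : A
  CONS_spec : ∀ (x : A) (L : List A),
    pap S (S.app CONS x) (Part.some (tup L)) = Part.some (tup (x :: L))
  SNOC : A
  SNOC_spec : ∀ (L : List A) (y : A),
    pap S (S.app SNOC (tup L)) (Part.some y) = Part.some (tup (L ++ [y]))
  Zc : A
  Z_spec : ∀ g : A, (S.app Zc g).Dom ∧ ∀ zg ∈ S.app Zc g, ∀ x : A,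
    S.app zg x = pap S (S.app g zg) (Part.some x)

/-- The partial function `x ↦ a·x` represented by `a ∈ A`. -/
def abar (P : StdPCA A) (a : A) : A → Option A :=
  fun x => if h : (P.S.app a x).Dom then some ((P.S.app a x).get h) else none

/-- An `x`-interrogation of the oracle `g : A ⇀ A` by `a ∈ A`, inside the pca. -/
def OInterrog (P : StdPCA A) (g : A → Option A) (a x : A) (L : List A) : Prop :=
  ∀ j (hj : j < L.length), ∃ v,
    P.S.app a (P.tup (x :: L.take j)) = Part.some (P.pairF P.f v) ∧ g v = some (L[j]'hj)

/-- The oracle application of `A[g]` : `a ·^g x = c`. -/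
def oapp (P : StdPCA A) (g : A → Option A) (a x c : A) : Prop :=
  ∃ L, OInterrog P g a x L ∧ P.S.app a (P.tup (x :: L)) = Part.some (P.pairF P.t c)

/-- `fn ≤_T g` : `fn` is representable in `A[g]`. -/
def leT (P : StdPCA A) (fn g : A → Option A) : Prop :=
  ∃ a : A, ∀ x y, fn x = some y → oapp P g a x y

/-- `j` is the join `f ⊔ g`. -/
def JoinSpec (P : StdPCA A) (f g j : A → Option A) : Prop :=
  (∀ x, j (P.pairF P.t x) = f x) ∧ (∀ x, j (P.pairF P.f x) = g x) ∧
  (∀ y, (∀ x, y ≠ P.pairF P.t x ∧ y ≠ P.pairF P.f x) → j y = none)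

/-- `K₂(A)` (built from the coding `mk`, `q`, `r`) is compatible with the pca
structure on `A`: elements of `A` translate between the codings and between
`q, r` and `⊥, ⊤`. -/
def CompatCoding (P : StdPCA A) (mk : List A → A) (q r : A) : Prop :=
  (∃ a : A, ∀ L, P.S.app a (mk L) = Part.some (P.tup L)) ∧
  (∃ b : A, ∀ L, P.S.app b (P.tup L) = Part.some (mk L)) ∧
  (∃ c : A, P.S.app c q = Part.some P.f ∧ P.S.app c r = Part.some P.t)

/-- Kleene application relation: `αβ(x) = y`. -/
def kphi (code : List ℕ → ℕ) (α β : ℕ → ℕ) (x y : ℕ) : Prop :=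
  ∃ n, α (code (x :: (List.range n).map β)) = y + 1 ∧
    ∀ j < n, α (code (x :: (List.range j).map β)) = 0

/-- Kleene's `K₂` on `ℕ^ℕ`. -/
def KleeneK2 (code : List ℕ → ℕ) : PCAStruct (ℕ → ℕ) :=
  ⟨fun α β => ⟨∀ x, ∃ y, kphi code α β x y, fun h x => (h x).choose⟩⟩

/-- `E₀ = ⟨⟩`, `E_{n+1} = ⟨E_n⟩`. -/
def Ecode (code : List ℕ → ℕ) : ℕ → ℕ
  | 0 => code []
  | n + 1 => code [Ecode code n]

/-! ### Auxiliary development -/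

namespace S13
variable {code : List ℕ → ℕ}




/-- Decoding. -/
noncomputable def dec (code : List ℕ → ℕ) (z : ℕ) : Option (List ℕ) :=
  if h : ∃ L, code L = z then some h.choose else none

lemma dec_code (hcode : Function.Injective code) (L : List ℕ) :
    dec code (code L) = some L := by
  have h : ∃ L', code L' = code L := ⟨L, rfl⟩
  simp only [dec, dif_pos h]
  exact congrArg some (hcode h.choose_spec)

lemma Ecode_inj (hcode : Function.Injective code) :
    Function.Injective (Ecode code) := by
  intro n m h
  induction n generalizing m with
  | zero =>
    cases m with
    | zero => rfl
    | succ m => exact absurd (hcode h).symm (by simp [Ecode])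
  | succ n ih =>
    cases m with
    | zero => exact absurd (hcode h) (by simp [Ecode])
    | succ m =>
      have : Ecode code n = Ecode code m := by
        have := hcode h; simpa using this
      exact congrArg Nat.succ (ih this)

noncomputable def Eidx (code : List ℕ → ℕ) (z : ℕ) : Option ℕ :=
  if h : ∃ n, Ecode code n = z then some h.choose else none

lemma Eidx_Ecode (hcode : Function.Injective code) (n : ℕ) :
    Eidx code (Ecode code n) = some n := by
  have h : ∃ m, Ecode code m = Ecode code n := ⟨n, rfl⟩
  simp only [Eidx, dif_pos h]
  exact congrArg some (Ecode_inj hcode h.choose_spec)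

lemma Eidx_eq_some {z m : ℕ} (h : Eidx code z = some m) : z = Ecode code m := by
  unfold Eidx at h
  split_ifs at h with h'
  · obtain rfl : h'.choose = m := Option.some.inj h
    exact h'.choose_spec.symm

lemma Eidx_eq_none_iff {z : ℕ} : Eidx code z = none ↔ ¬∃ n, Ecode code n = z := by
  unfold Eidx; split_ifs with h <;> simp [h]

lemma Eidx_cons_none (hcode : Function.Injective code) {z : ℕ}
    (hz : Eidx code z = none) (L : List ℕ) : Eidx code (code (z :: L)) = none := by
  rw [Eidx_eq_none_iff]
  rintro ⟨n, hn⟩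
  cases n with
  | zero => exact absurd (hcode hn) (by simp)
  | succ n =>
    have := hcode hn
    simp only [Ecode, List.cons.injEq] at this
    exact (Eidx_eq_none_iff.mp hz) ⟨n, this.1⟩

/-- `Eify f` agrees with `f` off the `E`-codes and has value `n` at `E n`. -/
noncomputable def Eify (code : List ℕ → ℕ) (f : ℕ → ℕ) (z : ℕ) : ℕ :=
  match Eidx code z with
  | some m => m
  | none => f z

lemma Eify_E (hcode : Function.Injective code) (f : ℕ → ℕ) (n : ℕ) :
    Eify code f (Ecode code n) = n := by
  unfold Eify; rw [Eidx_Ecode hcode]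

lemma Eify_nonE {f : ℕ → ℕ} {z : ℕ} (h : Eidx code z = none) :
    Eify code f z = f z := by
  unfold Eify; rw [h]

lemma Eify_of_B (hf : ∀ n, f (Ecode code n) = n) : Eify code f = f := by
  funext z
  cases h : Eidx code z with
  | none => exact Eify_nonE h
  | some m =>
    have hz := Eidx_eq_some h
    subst hz
    rw [Eify, h, hf m]

lemma kphi_unique {α β : ℕ → ℕ} {x y y' : ℕ}
    (h1 : kphi code α β x y) (h2 : kphi code α β x y') : y = y' := by
  obtain ⟨n, hn, hn0⟩ := h1
  obtain ⟨m, hm, hm0⟩ := h2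
  rcases lt_trichotomy n m with h | h | h
  · rw [hm0 n h] at hn; omega
  · subst h; rw [hn] at hm; omega
  · rw [hn0 m h] at hm; omega

lemma mem_app_iff {α β γ : ℕ → ℕ} :
    γ ∈ (KleeneK2 code).app α β ↔ ∀ x, kphi code α β x (γ x) := by
  constructor
  · rintro ⟨h, rfl⟩ x
    exact (h x).choose_spec
  · intro h
    refine ⟨fun x => ⟨γ x, h x⟩, funext fun x => ?_⟩
    exact kphi_unique (Exists.choose_spec _) (h x)

lemma app_eq_some {α β γ : ℕ → ℕ} (h : ∀ x, kphi code α β x (γ x)) :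
    (KleeneK2 code).app α β = Part.some γ :=
  Part.eq_some_iff.mpr (mem_app_iff.mpr h)

lemma pap_some {X : Type*} (S : PCAStruct X) (a b : X) :
    pap S (Part.some a) (Part.some b) = S.app a b := by
  simp [pap]

/-- Part (1): `B` is closed under application. -/
lemma app_B {α β γ : ℕ → ℕ} (hα : ∀ n, α (Ecode code n) = n)
    (hγ : γ ∈ (KleeneK2 code).app α β) (n : ℕ) : γ (Ecode code n) = n := by
  have h1 := (mem_app_iff.mp hγ) (Ecode code n)
  have h2 : kphi code α β (Ecode code n) n :=
    ⟨0, by simpa [Ecode] using hα (n + 1), by omega⟩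
  exact kphi_unique h1 h2

/-! ### Segment evaluation -/

def SegPhi (code : List ℕ → ℕ) (α : ℕ → ℕ) (g : List ℕ) (q v : ℕ) : Prop :=
  ∃ n, n ≤ g.length ∧ α (code (q :: g.take n)) = v + 1 ∧
    ∀ j < n, α (code (q :: g.take j)) = 0

lemma segPhi_unique {α : ℕ → ℕ} {g : List ℕ} {q v v' : ℕ}
    (h1 : SegPhi code α g q v) (h2 : SegPhi code α g q v') : v = v' := by
  obtain ⟨n, _, hn, hn0⟩ := h1
  obtain ⟨m, _, hm, hm0⟩ := h2
  rcases lt_trichotomy n m with h | h | h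
  · rw [hm0 n h] at hn; omega
  · subst h; rw [hn] at hm; omega
  · rw [hn0 m h] at hm; omega

lemma segPhi_congr {α α' : ℕ → ℕ} {g : List ℕ} {q : ℕ}
    (h : ∀ k ≤ g.length, α (code (q :: g.take k)) = α' (code (q :: g.take k)))
    {v : ℕ} : SegPhi code α g q v ↔ SegPhi code α' g q v := by
  constructor
  · rintro ⟨n, hn, h1, h2⟩
    exact ⟨n, hn, by rw [← h n hn]; exact h1,
      fun j hj => by rw [← h j (le_of_lt (lt_of_lt_of_le hj hn))]; exact h2 j hj⟩
  · rintro ⟨n, hn, h1, h2⟩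
    exact ⟨n, hn, by rw [h n hn]; exact h1,
      fun j hj => by rw [h j (le_of_lt (lt_of_lt_of_le hj hn))]; exact h2 j hj⟩

noncomputable def segF (code : List ℕ → ℕ) (α : ℕ → ℕ) (g : List ℕ) (q : ℕ) :
    Option ℕ :=
  if h : ∃ v, SegPhi code α g q v then some h.choose else none

lemma segF_eq_some {α : ℕ → ℕ} {g : List ℕ} {q v : ℕ} :
    segF code α g q = some v ↔ SegPhi code α g q v := by
  unfold segF
  split_ifs with h
  · simp only [Option.some.injEq]
    constructor
    · rintro rfl; exact h.choose_spec
    · intro hv; exact segPhi_unique h.choose_spec hv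
  · exact iff_of_false (by simp) fun hv => h ⟨v, hv⟩

lemma segF_congr {α α' : ℕ → ℕ} {g : List ℕ} {q : ℕ}
    (h : ∀ k ≤ g.length, α (code (q :: g.take k)) = α' (code (q :: g.take k))) :
    segF code α g q = segF code α' g q := by
  unfold segF
  split_ifs with h1 h2 h2
  · exact congrArg some
      (segPhi_unique ((segPhi_congr h).mp h1.choose_spec) h2.choose_spec)
  · exact absurd ⟨h1.choose, (segPhi_congr h).mp h1.choose_spec⟩ h2
  · exact absurd ⟨h2.choose, (segPhi_congr h).mpr h2.choose_spec⟩ h1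
  · rfl

lemma take_map_range {k m : ℕ} (γ : ℕ → ℕ) (hk : k ≤ m) :
    ((List.range m).map γ).take k = (List.range k).map γ := by
  rw [← List.map_take, List.take_range, Nat.min_eq_left hk]

lemma segPhi_sound {α γ : ℕ → ℕ} {m q v : ℕ}
    (h : SegPhi code α ((List.range m).map γ) q v) : kphi code α γ q v := by
  obtain ⟨n, hn, h1, h2⟩ := h
  rw [List.length_map, List.length_range] at hn
  refine ⟨n, ?_, fun j hj => ?_⟩
  · rw [← take_map_range γ hn]; exact h1
  · rw [← take_map_range γ (le_of_lt (lt_of_lt_of_le hj hn))]; exact h2 j hj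

lemma segPhi_complete {α γ : ℕ → ℕ} {q v : ℕ} (h : kphi code α γ q v) :
    ∃ m0, ∀ m ≥ m0, SegPhi code α ((List.range m).map γ) q v := by
  obtain ⟨n, h1, h2⟩ := h
  refine ⟨n, fun m hm => ⟨n, by simp [hm], ?_, fun j hj => ?_⟩⟩
  · rw [take_map_range γ hm]; exact h1
  · rw [take_map_range γ (le_of_lt (lt_of_lt_of_le hj hm))]; exact h2 j hj

/-! ### Outer application over partial oracles -/

def OAPP (code : List ℕ → ℕ) (A B : ℕ → Option ℕ) (x y n : ℕ) : Prop :=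
  ∃ L : List ℕ, L.length = n ∧ (∀ j (hj : j < L.length), B j = some L[j]) ∧
    (∀ j < n, A (code (x :: L.take j)) = some 0) ∧ A (code (x :: L)) = some (y + 1)

lemma oapp_unique_aux {A B : ℕ → Option ℕ} {x y y' n n' : ℕ} (hle : n ≤ n')
    (h : OAPP code A B x y n) (h' : OAPP code A B x y' n') : y = y' := by
  obtain ⟨L, hL, hB, h0, hv⟩ := h
  obtain ⟨L', hL', hB', h0', hv'⟩ := h'
  have hpre : L = L'.take n := by
    apply List.ext_getElem (by simp [hL, hL']; omega)
    intro i hi1 hi2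
    have e1 := hB i hi1
    have e2 := hB' i (by rw [hL']; rw [hL] at hi1; omega)
    rw [List.getElem_take]
    rw [e1] at e2
    exact Option.some.inj e2
  rcases eq_or_lt_of_le hle with rfl | hlt
  · have hLL : L = L' := by
      rw [hpre, ← hL', List.take_length]
    rw [hLL, hv'] at hv
    have := Option.some.inj hv; omega
  · have := h0' n hlt
    rw [← hpre, hv] at this
    have := Option.some.inj this; omega

lemma oapp_unique {A B : ℕ → Option ℕ} {x y y' n n' : ℕ}
    (h : OAPP code A B x y n) (h' : OAPP code A B x y' n') : y = y' := by
  rcases le_total n n' with hle | hle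
  · exact oapp_unique_aux hle h h'
  · exact (oapp_unique_aux hle h' h).symm

lemma oapp_congrB {A B B' : ℕ → Option ℕ} {x y n : ℕ}
    (hB : ∀ j < n, B j = B' j) (h : OAPP code A B x y n) : OAPP code A B' x y n := by
  obtain ⟨L, hL, hBL, h0, hv⟩ := h
  exact ⟨L, hL, fun j hj => by rw [← hB j (by omega)]; exact hBL j hj, h0, hv⟩

/-- Canonical value list of `segF β g`. -/
noncomputable def LL (code : List ℕ → ℕ) (β : ℕ → ℕ) (g : List ℕ) : List ℕ :=
  (List.range g.length).map fun j => (segF code β g j).getD 0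

lemma L_char {β : ℕ → ℕ} {g L : List ℕ} {n : ℕ} (hL : L.length = n)
    (hBL : ∀ j (hj : j < L.length), segF code β g j = some L[j])
    (hn : n ≤ g.length) : L = (LL code β g).take n := by
  apply List.ext_getElem (by simp [hL, LL]; omega)
  intro i hi1 hi2
  have := hBL i hi1
  rw [List.getElem_take]
  simp only [LL, List.getElem_map, List.getElem_range]
  rw [this]
  rfl

lemma oapp_congrA {A A' : ℕ → Option ℕ} {β : ℕ → ℕ} {g : List ℕ} {x y n : ℕ}
    (hn : n ≤ g.length)
    (hA : ∀ j ≤ n, A (code (x :: (LL code β g).take j))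
      = A' (code (x :: (LL code β g).take j)))
    (h : OAPP code A (segF code β g) x y n) : OAPP code A' (segF code β g) x y n := by
  obtain ⟨L, hL, hBL, h0, hv⟩ := h
  have hLeq : L = (LL code β g).take n := L_char hL hBL hn
  refine ⟨L, hL, hBL, fun j hj => ?_, ?_⟩
  · have : L.take j = (LL code β g).take j := by
      rw [hLeq, List.take_take, Nat.min_eq_left (by omega)]
    rw [this, ← hA j (by omega)]
    rw [← this]; exact h0 j hj
  · rw [hLeq, ← hA n le_rfl, ← hLeq]; exact hv

-- CHUNK2

/-! ### The simulation value `Ftau` -/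

def Done (code : List ℕ → ℕ) (α β : ℕ → ℕ) (g : List ℕ) (x : ℕ) : Prop :=
  (∀ j ≤ x, (∃ v, SegPhi code α g j v) ∧ (∃ v, SegPhi code β g j v)) ∧
  ∃ y, ∃ n, n ≤ g.length ∧ OAPP code (segF code α g) (segF code β g) x y n

noncomputable def Ftau (code : List ℕ → ℕ) (α β : ℕ → ℕ) (w : ℕ) : ℕ :=
  match dec code w with
  | some (x :: g) => if h : Done code α β g x then h.2.choose + 1 else 0
  | _ => 0

lemma Ftau_eq {w x : ℕ} {g : List ℕ} (hd : dec code w = some (x :: g)) (α β : ℕ → ℕ) :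
    Ftau code α β w = if h : Done code α β g x then h.2.choose + 1 else 0 := by
  unfold Ftau; rw [hd]

lemma Ftau_eq_none {w : ℕ} (hd : dec code w = none) (α β : ℕ → ℕ) :
    Ftau code α β w = 0 := by
  unfold Ftau; rw [hd]

lemma Ftau_eq_nil {w : ℕ} (hd : dec code w = some []) (α β : ℕ → ℕ) :
    Ftau code α β w = 0 := by
  unfold Ftau; rw [hd]

lemma Ftau_eq_succ (hcode : Function.Injective code) {α β : ℕ → ℕ} {g : List ℕ}
    {x v n : ℕ} (hD : Done code α β g x) (hn : n ≤ g.length)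
    (hO : OAPP code (segF code α g) (segF code β g) x v n) :
    Ftau code α β (code (x :: g)) = v + 1 := by
  rw [Ftau_eq (dec_code hcode _), dif_pos hD]
  obtain ⟨n', hn', hO'⟩ := hD.2.choose_spec
  rw [oapp_unique hO' hO]

/-! ### Moduli -/

noncomputable def Mtau (code : List ℕ → ℕ) (w : ℕ) : ℕ :=
  match dec code w with
  | some (x :: g) =>
    (((Finset.range (max x g.length + 1)) ×ˢ Finset.range (g.length + 1)).image
      fun p => code (p.1 :: g.take p.2)).sup id + 1
  | _ => 0

lemma Mtau_eq {w x : ℕ} {g : List ℕ} (hd : dec code w = some (x :: g)) :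
    Mtau code w =
    (((Finset.range (max x g.length + 1)) ×ˢ Finset.range (g.length + 1)).image
      fun p => code (p.1 :: g.take p.2)).sup id + 1 := by
  unfold Mtau; rw [hd]

noncomputable def Malpha (code : List ℕ → ℕ) (β : ℕ → ℕ) (w : ℕ) : ℕ :=
  match dec code w with
  | some (x :: g) =>
    (((Finset.range (x + 1) ∪ (Finset.range (g.length + 1)).image
        (fun j => code (x :: (LL code β g).take j))) ×ˢ
      Finset.range (g.length + 1)).image
      fun p => code (p.1 :: g.take p.2)).sup id + 1
  | _ => 0

lemma Malpha_eq {β : ℕ → ℕ} {w x : ℕ} {g : List ℕ} (hd : dec code w = some (x :: g)) :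
    Malpha code β w =
    (((Finset.range (x + 1) ∪ (Finset.range (g.length + 1)).image
        (fun j => code (x :: (LL code β g).take j))) ×ˢ
      Finset.range (g.length + 1)).image
      fun p => code (p.1 :: g.take p.2)).sup id + 1 := by
  unfold Malpha; rw [hd]

lemma Ftau_congr_beta {α β β' : ℕ → ℕ} {w : ℕ}
    (hb : ∀ p < Mtau code w, β p = β' p) : Ftau code α β w = Ftau code α β' w := by
  cases hd : dec code w with
  | none => rw [Ftau_eq_none hd, Ftau_eq_none hd]
  | some L =>
    cases L with
    | nil => rw [Ftau_eq_nil hd, Ftau_eq_nil hd]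
    | cons x g =>
      rw [Mtau_eq hd] at hb
      have key : ∀ j ≤ max x g.length, ∀ k ≤ g.length,
          β (code (j :: g.take k)) = β' (code (j :: g.take k)) := by
        intro j hj k hk
        apply hb
        have hmem : code (j :: g.take k) ∈
            (((Finset.range (max x g.length + 1)) ×ˢ Finset.range (g.length + 1)).image
              fun p => code (p.1 :: g.take p.2)) :=
          Finset.mem_image.mpr ⟨(j, k), Finset.mem_product.mpr
            ⟨Finset.mem_range.mpr (by omega), Finset.mem_range.mpr (by omega)⟩, rfl⟩
        have := Finset.le_sup (f := id) hmem
        simp only [id] at this; omega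
      have hseg : ∀ j ≤ max x g.length, segF code β g j = segF code β' g j :=
        fun j hj => segF_congr (key j hj)
      have hIff : Done code α β g x ↔ Done code α β' g x := by
        apply and_congr
        · exact forall₂_congr fun j hj => and_congr Iff.rfl
            (exists_congr fun v => segPhi_congr (key j (by omega)))
        · refine exists_congr fun y => exists_congr fun n => and_congr_right fun hn => ?_
          constructor
          · exact fun h => oapp_congrB (fun j hj => hseg j (by omega)) h
          · exact fun h => oapp_congrB (fun j hj => (hseg j (by omega)).symm) h
      rw [Ftau_eq hd, Ftau_eq hd]
      by_cases hD : Done code α β g x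
      · rw [dif_pos hD, dif_pos (hIff.mp hD)]
        obtain ⟨n, hn, hO⟩ := hD.2.choose_spec
        obtain ⟨n', hn', hO'⟩ := (hIff.mp hD).2.choose_spec
        have hO2 : OAPP code (segF code α g) (segF code β' g) x hD.2.choose n :=
          oapp_congrB (fun j hj => hseg j (by omega)) hO
        rw [oapp_unique hO2 hO']
      · rw [dif_neg hD, dif_neg (fun h => hD (hIff.mpr h))]

lemma Ftau_congr_alpha {α α' β : ℕ → ℕ} {w : ℕ}
    (ha : ∀ p < Malpha code β w, α p = α' p) : Ftau code α β w = Ftau code α' β w := by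
  cases hd : dec code w with
  | none => rw [Ftau_eq_none hd, Ftau_eq_none hd]
  | some L =>
    cases L with
    | nil => rw [Ftau_eq_nil hd, Ftau_eq_nil hd]
    | cons x g =>
      rw [Malpha_eq hd] at ha
      set T : Finset ℕ := Finset.range (x + 1) ∪ (Finset.range (g.length + 1)).image
        (fun j => code (x :: (LL code β g).take j)) with hT
      have key : ∀ u ∈ T, ∀ k ≤ g.length,
          α (code (u :: g.take k)) = α' (code (u :: g.take k)) := by
        intro u hu k hk
        apply ha
        have hmem : code (u :: g.take k) ∈
            ((T ×ˢ Finset.range (g.length + 1)).image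
              fun p => code (p.1 :: g.take p.2)) :=
          Finset.mem_image.mpr ⟨(u, k), Finset.mem_product.mpr
            ⟨hu, Finset.mem_range.mpr (by omega)⟩, rfl⟩
        have := Finset.le_sup (f := id) hmem
        simp only [id] at this; omega
      have hseg : ∀ u ∈ T, segF code α g u = segF code α' g u :=
        fun u hu => segF_congr (key u hu)
      have hmemT1 : ∀ j ≤ x, j ∈ T := fun j hj =>
        Finset.mem_union_left _ (Finset.mem_range.mpr (by omega))
      have hmemT2 : ∀ j ≤ g.length, code (x :: (LL code β g).take j) ∈ T := fun j hj =>
        Finset.mem_union_right _ (Finset.mem_image.mpr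
          ⟨j, Finset.mem_range.mpr (by omega), rfl⟩)
      have hIff : Done code α β g x ↔ Done code α' β g x := by
        apply and_congr
        · exact forall₂_congr fun j hj => and_congr
            (exists_congr fun v => segPhi_congr (key j (hmemT1 j hj))) Iff.rfl
        · refine exists_congr fun y => exists_congr fun n => and_congr_right fun hn => ?_
          constructor
          · exact fun h => oapp_congrA hn
              (fun j hj => hseg _ (hmemT2 j (by omega))) h
          · exact fun h => oapp_congrA hn
              (fun j hj => (hseg _ (hmemT2 j (by omega))).symm) h
      rw [Ftau_eq hd, Ftau_eq hd]
      by_cases hD : Done code α β g x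
      · rw [dif_pos hD, dif_pos (hIff.mp hD)]
        obtain ⟨n, hn, hO⟩ := hD.2.choose_spec
        obtain ⟨n', hn', hO'⟩ := (hIff.mp hD).2.choose_spec
        have hO2 : OAPP code (segF code α' g) (segF code β g) x hD.2.choose n :=
          oapp_congrA hn (fun j hj => hseg _ (hmemT2 j (by omega))) hO
        rw [oapp_unique hO2 hO']
      · rw [dif_neg hD, dif_neg (fun h => hD (hIff.mpr h))]

-- CHUNK3

/-! ### The machine builder -/

noncomputable def mach (code : List ℕ → ℕ) (F : (ℕ → ℕ) → ℕ → ℕ) (M : ℕ → ℕ)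
    (z : ℕ) : ℕ :=
  match Eidx code z with
  | some m => m
  | none =>
    match dec code z with
    | some (w :: seg) =>
      if M w ≤ seg.length then F (fun p => seg.getD p 0) w + 1 else 0
    | _ => 0

lemma mach_E {F M} {z m : ℕ} (hE : Eidx code z = some m) : mach code F M z = m := by
  unfold mach; rw [hE]

lemma mach_mem_B (hcode : Function.Injective code) (F M) (n : ℕ) :
    mach code F M (Ecode code n) = n :=
  mach_E (Eidx_Ecode hcode n)

lemma mach_cons {F M} {z w : ℕ} {seg : List ℕ} (hE : Eidx code z = none)
    (hd : dec code z = some (w :: seg)) :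
    mach code F M z = if M w ≤ seg.length then F (fun p => seg.getD p 0) w + 1 else 0 := by
  unfold mach; rw [hE, hd]

lemma getD_map_range {m p : ℕ} (β : ℕ → ℕ) (hp : p < m) :
    ((List.range m).map β).getD p 0 = β p := by
  simp [List.getD_eq_getElem?_getD, hp]

/-- Applying a machine in `K₂`. -/
lemma mach_app (hcode : Function.Injective code) (F : (ℕ → ℕ) → ℕ → ℕ) (M : ℕ → ℕ)
    (hcont : ∀ β β' w, (∀ p < M w, β p = β' p) → F β w = F β' w) (β : ℕ → ℕ) :
    (KleeneK2 code).app (mach code F M) β = Part.some (Eify code (F β)) := by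
  apply app_eq_some
  intro x
  cases hE : Eidx code x with
  | some m =>
    have hx : x = Ecode code m := Eidx_eq_some hE
    subst hx
    refine ⟨0, ?_, by omega⟩
    have h1 : code (Ecode code m :: (List.range 0).map β) = Ecode code (m + 1) := by
      simp [Ecode]
    rw [h1, mach_mem_B hcode, Eify_E hcode]
  | none =>
    refine ⟨M x, ?_, ?_⟩
    · have hEc : Eidx code (code (x :: (List.range (M x)).map β)) = none :=
        Eidx_cons_none hcode hE _
      rw [mach_cons hEc (dec_code hcode _)]
      rw [if_pos (by simp)]
      rw [Eify_nonE hE]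
      congr 1
      apply hcont
      intro p hp
      exact getD_map_range β hp
    · intro j hj
      have hEc : Eidx code (code (x :: (List.range j).map β)) = none :=
        Eidx_cons_none hcode hE _
      rw [mach_cons hEc (dec_code hcode _)]
      rw [if_neg (by simp; omega)]

/-! ### The `k` combinator -/

noncomputable def Fk (code : List ℕ → ℕ) (α : ℕ → ℕ) (z : ℕ) : ℕ :=
  match dec code z with
  | some [x] => α x + 1
  | _ => 0

noncomputable def Mk (code : List ℕ → ℕ) (z : ℕ) : ℕ :=
  match dec code z with
  | some [x] => x + 1
  | _ => 0

lemma Fk_cont : ∀ (β β' : ℕ → ℕ) (z : ℕ), (∀ p < Mk code z, β p = β' p) →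
    Fk code β z = Fk code β' z := by
  intro β β' z h
  unfold Fk
  unfold Mk at h
  cases hd : dec code z with
  | none => rfl
  | some L =>
    rw [hd] at h
    match L with
    | [] => rfl
    | [x] =>
      show β x + 1 = β' x + 1
      exact congrArg (· + 1) (h x (Nat.lt_succ_self x))
    | x :: y :: t => rfl

noncomputable def kdef (code : List ℕ → ℕ) : ℕ → ℕ :=
  mach code (Fk code) (Mk code)

lemma k_axiom (hcode : Function.Injective code) {α : ℕ → ℕ}
    (hα : ∀ n, α (Ecode code n) = n) (β : ℕ → ℕ) :
    pap (KleeneK2 code) ((KleeneK2 code).app (kdef code) α) (Part.some β)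
      = Part.some α := by
  rw [kdef, mach_app hcode _ _ Fk_cont α, pap_some]
  apply app_eq_some
  intro x
  refine ⟨0, ?_, by omega⟩
  show Eify code (Fk code α) (code (x :: (List.range 0).map β)) = α x + 1
  simp only [List.range_zero, List.map_nil]
  cases hE : Eidx code x with
  | some m =>
    have hx : x = Ecode code m := Eidx_eq_some hE
    subst hx
    have h1 : code [Ecode code m] = Ecode code (m + 1) := rfl
    rw [h1, Eify_E hcode, hα m]
  | none =>
    have hEc : Eidx code (code [x]) = none := Eidx_cons_none hcode hE _
    rw [Eify_nonE hEc]
    unfold Fk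
    rw [dec_code hcode]

-- CHUNK4

/-! ### The `s` combinator -/

noncomputable def Ms (code : List ℕ → ℕ) (z : ℕ) : ℕ :=
  match dec code z with
  | some (w :: seg) => Malpha code (fun p => seg.getD p 0) w
  | _ => 0

lemma Ms_eq {z w : ℕ} {seg : List ℕ} (hd : dec code z = some (w :: seg)) :
    Ms code z = Malpha code (fun p => seg.getD p 0) w := by
  unfold Ms; rw [hd]

noncomputable def Fs (code : List ℕ → ℕ) (α : ℕ → ℕ) : ℕ → ℕ :=
  mach code (Ftau code α) (Mtau code)

lemma Fs_cont : ∀ (α α' : ℕ → ℕ) (z : ℕ), (∀ p < Ms code z, α p = α' p) →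
    Fs code α z = Fs code α' z := by
  intro α α' z h
  unfold Fs
  cases hE : Eidx code z with
  | some m => rw [mach_E hE, mach_E hE]
  | none =>
    cases hd : dec code z with
    | none => unfold mach; rw [hE, hd]
    | some L =>
      cases L with
      | nil => unfold mach; rw [hE, hd]
      | cons w seg =>
        rw [mach_cons hE hd, mach_cons hE hd]
        rw [Ms_eq hd] at h
        split_ifs with hlen
        · congr 1
          exact Ftau_congr_alpha h
        · rfl

noncomputable def sdef (code : List ℕ → ℕ) : ℕ → ℕ :=
  mach code (Fs code) (Ms code)

/-! ### Soundness and completeness of `Ftau` -/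

lemma Ftau_sound (hcode : Function.Injective code) {α β γ Af Bf : ℕ → ℕ}
    (hA : ∀ q, kphi code α γ q (Af q)) (hB : ∀ q, kphi code β γ q (Bf q))
    {x v m : ℕ} (hv : Ftau code α β (code (x :: (List.range m).map γ)) = v + 1) :
    kphi code Af Bf x v := by
  set g : List ℕ := (List.range m).map γ with hg
  rw [Ftau_eq (dec_code hcode _)] at hv
  split_ifs at hv with hD
  · have hch : hD.2.choose = v := by omega
    obtain ⟨n, hn, hO⟩ := hD.2.choose_spec
    rw [hch] at hO
    obtain ⟨L, hL, hBL, h0, hfin⟩ := hO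
    have hLj : ∀ j (hj : j < L.length), L[j] = Bf j := by
      intro j hj
      have h1 := segF_eq_some.mp (hBL j hj)
      have h2 : kphi code β γ j (L[j]'hj) := segPhi_sound h1
      exact kphi_unique h2 (hB j)
    have hLL : L = (List.range n).map Bf := by
      apply List.ext_getElem (by simp [hL])
      intro i hi1 hi2
      simp only [List.getElem_map, List.getElem_range]
      exact hLj i hi1
    refine ⟨n, ?_, ?_⟩
    · have h1 := segF_eq_some.mp hfin
      have h2 : kphi code α γ (code (x :: L)) (v + 1) := segPhi_sound h1
      have h3 := kphi_unique h2 (hA (code (x :: L)))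
      rw [← hLL, ← h3]
    · intro j hj
      have h1 := segF_eq_some.mp (h0 j hj)
      have h2 : kphi code α γ (code (x :: L.take j)) 0 := segPhi_sound h1
      have htk : L.take j = (List.range j).map Bf := by
        rw [hLL, take_map_range Bf (by omega)]
      have h3 := kphi_unique h2 (hA (code (x :: L.take j)))
      rw [← htk, ← h3]

lemma Ftau_complete (hcode : Function.Injective code) {α β γ Af Bf : ℕ → ℕ}
    (hA : ∀ q, kphi code α γ q (Af q)) (hB : ∀ q, kphi code β γ q (Bf q))
    {x v : ℕ} (hx : kphi code Af Bf x v) :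
    ∃ m, Ftau code α β (code (x :: (List.range m).map γ)) = v + 1 := by
  obtain ⟨n, hfin, h0⟩ := hx
  have c1 : ∀ q, ∃ m0, ∀ m ≥ m0, SegPhi code α ((List.range m).map γ) q (Af q) :=
    fun q => segPhi_complete (hA q)
  have c2 : ∀ q, ∃ m0, ∀ m ≥ m0, SegPhi code β ((List.range m).map γ) q (Bf q) :=
    fun q => segPhi_complete (hB q)
  classical
  set f1 : ℕ → ℕ := fun q => (c1 q).choose with hf1
  set f2 : ℕ → ℕ := fun q => (c2 q).choose with hf2
  have hf1s : ∀ q m, f1 q ≤ m → SegPhi code α ((List.range m).map γ) q (Af q) :=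
    fun q m hm => (c1 q).choose_spec m hm
  have hf2s : ∀ q m, f2 q ≤ m → SegPhi code β ((List.range m).map γ) q (Bf q) :=
    fun q m hm => (c2 q).choose_spec m hm
  set m1 : ℕ := (Finset.range (max x n + 1)).sup fun j => max (f1 j) (f2 j) with hm1
  set m2 : ℕ := (Finset.range (n + 1)).sup
    fun j => f1 (code (x :: (List.range j).map Bf)) with hm2
  set m : ℕ := max (max m1 m2) n with hm
  have hle1 : ∀ j ≤ max x n, f1 j ≤ m ∧ f2 j ≤ m := by
    intro j hj
    have h := Finset.le_sup (f := fun j => max (f1 j) (f2 j))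
      (Finset.mem_range.mpr (show j < max x n + 1 by omega))
    have hm1m : m1 ≤ m := le_trans (le_max_left m1 m2) (le_max_left _ n)
    exact ⟨le_trans (le_trans (le_max_left (f1 j) (f2 j)) h) hm1m,
      le_trans (le_trans (le_max_right (f1 j) (f2 j)) h) hm1m⟩
  have hle2 : ∀ j ≤ n, f1 (code (x :: (List.range j).map Bf)) ≤ m := by
    intro j hj
    have h := Finset.le_sup (f := fun j => f1 (code (x :: (List.range j).map Bf)))
      (Finset.mem_range.mpr (show j < n + 1 by omega))
    exact le_trans h (le_trans (le_max_right m1 m2) (le_max_left _ n))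
  set g : List ℕ := (List.range m).map γ with hg
  have hglen : g.length = m := by simp [hg]
  have hOA : OAPP code (segF code α g) (segF code β g) x v n := by
    refine ⟨(List.range n).map Bf, by simp, ?_, ?_, ?_⟩
    · intro j hj
      simp only [List.length_map, List.length_range] at hj
      have hs := hf2s j m (hle1 j (by omega)).2
      rw [segF_eq_some.mpr hs]
      congr 1
      simp [hj]
    · intro j hj
      have hs := hf1s (code (x :: (List.range j).map Bf)) m (hle2 j (by omega))
      rw [take_map_range Bf (by omega)]
      rw [h0 j hj] at hs
      exact segF_eq_some.mpr hs
    · have hs := hf1s (code (x :: (List.range n).map Bf)) m (hle2 n le_rfl)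
      rw [hfin] at hs
      exact segF_eq_some.mpr hs
  have hD : Done code α β g x := by
    refine ⟨fun j hj => ?_, v, n, by rw [hglen]; omega, hOA⟩
    exact ⟨⟨Af j, hf1s j m (hle1 j (by omega)).1⟩, ⟨Bf j, hf2s j m (hle1 j (by omega)).2⟩⟩
  exact ⟨m, Ftau_eq_succ hcode hD (by rw [hglen]; omega) hOA⟩

-- CHUNK5

lemma exists_nonE (hcode : Function.Injective code) (q : ℕ) :
    ∃ x, q ≤ x ∧ Eidx code x = none := by
  set zl : ℕ → ℕ := fun k => code (List.replicate (k + 2) 0) with hzl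
  have hinj : Function.Injective zl := by
    intro a b h
    have := congrArg List.length (hcode h)
    simp at this; omega
  have hnE : ∀ k, Eidx code (zl k) = none := by
    intro k
    rw [Eidx_eq_none_iff]
    rintro ⟨n, hn⟩
    cases n with
    | zero =>
      have := congrArg List.length (hcode hn)
      simp [Ecode] at this
    | succ n =>
      have := congrArg List.length (hcode hn)
      simp [Ecode] at this
  by_contra h
  push_neg at h
  have hlt : ∀ k, zl k < q := by
    intro k
    by_contra hk
    push_neg at hk
    exact h (zl k) hk (hnE k)
  have hsub : (Finset.range (q + 1)).image zl ⊆ Finset.range q := by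
    intro t ht
    obtain ⟨k, _, rfl⟩ := Finset.mem_image.mp ht
    exact Finset.mem_range.mpr (hlt k)
  have hcard := Finset.card_le_card hsub
  rw [Finset.card_image_of_injective _ hinj, Finset.card_range, Finset.card_range] at hcard
  omega

/-- The central equality for the `s` combinator. -/
lemma tau_eq (hcode : Function.Injective code) {α β γ : ℕ → ℕ}
    (hα : ∀ n, α (Ecode code n) = n) :
    (KleeneK2 code).app (Eify code (Ftau code α β)) γ
      = pap (KleeneK2 code) ((KleeneK2 code).app α γ) ((KleeneK2 code).app β γ) := by
  set K := KleeneK2 code with hK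
  set τ := Eify code (Ftau code α β) with hτ
  by_cases hR : (pap K (K.app α γ) (K.app β γ)).Dom
  · obtain ⟨δ, hδ⟩ := Part.dom_iff_mem.mp hR
    rw [pap, Part.mem_bind_iff] at hδ
    obtain ⟨Af, hAmem, hδ⟩ := hδ
    rw [Part.mem_bind_iff] at hδ
    obtain ⟨Bf, hBmem, hδ⟩ := hδ
    have hA := mem_app_iff.mp hAmem
    have hB := mem_app_iff.mp hBmem
    have hδk := mem_app_iff.mp hδ
    have hAB : ∀ n, Af (Ecode code n) = n := app_B hα hAmem
    have hδB : ∀ n, δ (Ecode code n) = n := app_B hAB hδ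
    have hL : K.app τ γ = Part.some δ := by
      apply app_eq_some
      intro x
      cases hE : Eidx code x with
      | some m =>
        have hx : x = Ecode code m := Eidx_eq_some hE
        subst hx
        refine ⟨0, ?_, by omega⟩
        have h1 : code (Ecode code m :: (List.range 0).map γ) = Ecode code (m + 1) := by
          simp [Ecode]
        rw [h1, hτ, Eify_E hcode, hδB m]
      | none =>
        obtain ⟨m, hm⟩ := Ftau_complete hcode hA hB (hδk x)
        have hex : ∃ j, Ftau code α β (code (x :: (List.range j).map γ)) ≠ 0 :=
          ⟨m, by rw [hm]; omega⟩
        set n0 := Nat.find hex with hn0def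
        have hn0 := Nat.find_spec hex
        obtain ⟨w, hw⟩ : ∃ w, Ftau code α β (code (x :: (List.range n0).map γ)) = w + 1 := by
          cases hvv : Ftau code α β (code (x :: (List.range n0).map γ)) with
          | zero => exact absurd hvv hn0
          | succ w => exact ⟨w, rfl⟩
        have hkv : kphi code Af Bf x w := Ftau_sound hcode hA hB hw
        have hwv : w = δ x := kphi_unique hkv (hδk x)
        refine ⟨n0, ?_, ?_⟩
        · rw [hτ, Eify_nonE (Eidx_cons_none hcode hE _), hw, hwv]
        · intro j hj
          rw [hτ, Eify_nonE (Eidx_cons_none hcode hE _)]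
          have := Nat.find_min hex hj
          simpa using this
    rw [hL, Part.eq_some_iff.mpr hAmem, Part.eq_some_iff.mpr hBmem, pap_some,
      Part.eq_some_iff.mpr hδ]
  · have hLD : ¬(K.app τ γ).Dom := by
      intro hD
      apply hR
      have hD' : ∀ x, ∃ y, kphi code τ γ x y := hD
      have key : ∀ q, (∃ v, kphi code α γ q v) ∧ (∃ v, kphi code β γ q v) := by
        intro q
        obtain ⟨x, hqx, hxE⟩ := exists_nonE hcode q
        obtain ⟨y, n, hyn, h0⟩ := hD' x
        have hne : Eidx code (code (x :: (List.range n).map γ)) = none :=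
          Eidx_cons_none hcode hxE _
        have hFt : Ftau code α β (code (x :: (List.range n).map γ)) = y + 1 := by
          rw [hτ] at hyn
          rwa [Eify_nonE hne] at hyn
        rw [Ftau_eq (dec_code hcode _)] at hFt
        split_ifs at hFt with hDn
        obtain ⟨htot, _⟩ := hDn
        obtain ⟨⟨va, hva⟩, ⟨vb, hvb⟩⟩ := htot q hqx
        exact ⟨⟨va, segPhi_sound hva⟩, ⟨vb, segPhi_sound hvb⟩⟩
      have hAd : (K.app α γ).Dom := fun q => (key q).1
      have hBd : (K.app β γ).Dom := fun q => (key q).2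
      set Af : ℕ → ℕ := (K.app α γ).get hAd with hAf
      set Bf : ℕ → ℕ := (K.app β γ).get hBd with hBf
      have hAmem : Af ∈ K.app α γ := ⟨hAd, rfl⟩
      have hBmem : Bf ∈ K.app β γ := ⟨hBd, rfl⟩
      have hA := mem_app_iff.mp hAmem
      have hB := mem_app_iff.mp hBmem
      have hAB : ∀ n, Af (Ecode code n) = n := app_B hα hAmem
      have hABd : (K.app Af Bf).Dom := by
        intro x
        cases hE : Eidx code x with
        | some m =>
          have hx : x = Ecode code m := Eidx_eq_some hE
          subst hx
          refine ⟨m, 0, ?_, by omega⟩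
          have h1 : code (Ecode code m :: (List.range 0).map Bf) = Ecode code (m + 1) := by
            simp [Ecode]
          rw [h1, hAB]
        | none =>
          obtain ⟨y, n, hyn, h0⟩ := hD' x
          have hne : Eidx code (code (x :: (List.range n).map γ)) = none :=
            Eidx_cons_none hcode hE _
          have hFt : Ftau code α β (code (x :: (List.range n).map γ)) = y + 1 := by
            rw [hτ] at hyn
            rwa [Eify_nonE hne] at hyn
          exact ⟨y, Ftau_sound hcode hA hB hFt⟩
      have heq : pap K (K.app α γ) (K.app β γ) = K.app Af Bf := by
        rw [Part.eq_some_iff.mpr hAmem, Part.eq_some_iff.mpr hBmem, pap_some]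
      rw [heq]
      exact hABd
    exact Part.ext' (iff_of_false hLD hR) fun h _ => absurd h hLD

end S13


/-- In Kleene's `K₂`, let `B = {α | ∀ n, α(E_n) = n}`. Then
(1) `B` is closed under application; (2) `B` contains `k'`, `s'` satisfying the
pca axioms for `B`; (3) `B` is a sub-pca not closed under `recursive in`: it
contains `γ` but omits some function computable (hence recursive in `γ`). -/
theorem statement13 (code : List ℕ → ℕ) (hcode : Function.Injective code) :
    let B : Set (ℕ → ℕ) := {α | ∀ n, α (Ecode code n) = n}
    let K := KleeneK2 code
    (∀ α ∈ B, ∀ β γ : ℕ → ℕ, γ ∈ K.app α β → γ ∈ B) ∧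
    (∃ k' ∈ B, ∃ s' ∈ B,
      (∀ α ∈ B, ∀ β ∈ B, pap K (K.app k' α) (Part.some β) = Part.some α) ∧
      (∀ α ∈ B, ∀ β ∈ B, (pap K (K.app s' α) (Part.some β)).Dom) ∧
      (∀ α ∈ B, ∀ β ∈ B, ∀ γ ∈ B,
        pap K (pap K (K.app s' α) (Part.some β)) (Part.some γ)
          = pap K (K.app α γ) (K.app β γ))) ∧
    (∃ γ ∈ B, ∃ β : ℕ → ℕ, Computable β ∧ β ∉ B) := by
  intro B K
  have h1 : ∀ α : ℕ → ℕ, (KleeneK2 code).app (S13.sdef code) α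
      = Part.some (S13.Fs code α) := by
    intro α
    have h := S13.mach_app hcode (S13.Fs code) (S13.Ms code) S13.Fs_cont α
    rwa [S13.Eify_of_B (f := S13.Fs code α) (fun n => S13.mach_mem_B hcode _ _ n)] at h
  have h2 : ∀ α β : ℕ → ℕ, (KleeneK2 code).app (S13.Fs code α) β
      = Part.some (S13.Eify code (S13.Ftau code α β)) :=
    fun α β => S13.mach_app hcode (S13.Ftau code α) (S13.Mtau code)
      (fun _ _ _ hb => S13.Ftau_congr_beta hb) β
  refine ⟨?_, ?_, ?_⟩
  · intro α hα β γ hγ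
    exact fun n => S13.app_B hα hγ n
  · refine ⟨S13.kdef code, fun n => S13.mach_mem_B hcode _ _ n,
      S13.sdef code, fun n => S13.mach_mem_B hcode _ _ n, ?_, ?_, ?_⟩
    · intro α hα β _
      exact S13.k_axiom hcode hα β
    · intro α hα β hβ
      have hd : (pap (KleeneK2 code) ((KleeneK2 code).app (S13.sdef code) α)
          (Part.some β)).Dom := by
        rw [h1 α, S13.pap_some, h2 α β]
        trivial
      exact hd
    · intro α hα β hβ γ hγ
      have he : pap (KleeneK2 code)
          (pap (KleeneK2 code) ((KleeneK2 code).app (S13.sdef code) α) (Part.some β))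
          (Part.some γ)
          = pap (KleeneK2 code) ((KleeneK2 code).app α γ) ((KleeneK2 code).app β γ) := by
        rw [h1 α, S13.pap_some, h2 α β, S13.pap_some]
        exact S13.tau_eq hcode hα
      exact he
  · refine ⟨S13.Eify code (fun _ => 0), fun n => S13.Eify_E hcode _ n,
      fun _ => 0, Computable.const 0, fun hB => ?_⟩
    simpa using hB 1

end OostenK2
end
end

section
/- A partial function Ptl(A,A) ⇀ A is of the form φ_α for some partial function α ∈ Ptl(A,A) if and only if it is partial sequential in the generalized sense (allowing non-total sequential trees T and partial maps F from leaves of T to A). -/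
open Classical

noncomputable section

namespace OostenK2

universe u

variable {A : Type u}

/-! ### Auxiliary machinery for Statement 14 -/

section S14Aux

lemma fpf_le_iff {p p' : FPF A} : p ≤ p' ↔ p.val ⊆ p'.val := Iff.rfl

lemma fpf_lt_iff {p p' : FPF A} : p < p' ↔ p.val ⊆ p'.val ∧ p.val ≠ p'.val := by
  rw [lt_iff_le_and_ne]
  constructor
  · rintro ⟨h1, h2⟩; exact ⟨h1, fun hv => h2 (Subtype.ext hv)⟩
  · rintro ⟨h1, h2⟩; exact ⟨h1, fun hv => h2 (congrArg Subtype.val hv)⟩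

lemma dom_eq (p : FPF A) : FPF.dom p = Prod.fst '' p.val := rfl

lemma fpf_pair_mem_of_dom {p p' : FPF A} (hle : p ≤ p') {x y : A}
    (hx : x ∈ FPF.dom p) (hxy : (x, y) ∈ p'.val) : (x, y) ∈ p.val := by
  obtain ⟨⟨x', y'⟩, hm, he⟩ := hx
  cases he
  have : y = y' := p'.2.1 hxy (hle hm)
  rwa [this]

/-! #### Part 2 : from a sequential tree to an `α` -/

section Part2

variable (code : List A → A) (q r : A) (T : Set (FPF A)) (F : FPF A → Option A)

def bQryP (p : FPF A) : Prop :=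
  ∃ a ∉ FPF.dom p, ∀ q', ImmSucc T p q' → FPF.dom q' = insert a (FPF.dom p)

def bQry (p : FPF A) : A := if h : bQryP T p then h.choose else q

lemma bQry_spec {p : FPF A} (h : bQryP T p) :
    bQry q T p ∉ FPF.dom p ∧
      ∀ q', ImmSucc T p q' → FPF.dom q' = insert (bQry q T p) (FPF.dom p) := by
  rw [bQry, dif_pos h]
  exact h.choose_spec

def bGo : List A → FPF A → Option (FPF A)
  | [], p => some p
  | b :: M, p =>
      if h : ∃ p', ImmSucc T p p' ∧ (bQry q T p, b) ∈ p'.val then bGo M h.choose else none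

lemma bGo_nil (p : FPF A) : bGo q T [] p = some p := rfl

lemma bGo_cons (b : A) (M : List A) (p : FPF A) :
    bGo q T (b :: M) p =
      if h : ∃ p', ImmSucc T p p' ∧ (bQry q T p, b) ∈ p'.val then bGo q T M h.choose
      else none := rfl

lemma bGo_le {M : List A} {p v : FPF A} (h : bGo q T M p = some v) : p ≤ v := by
  induction M generalizing p with
  | nil => exact le_of_eq (Option.some.inj h)
  | cons b M ih =>
    rw [bGo_cons] at h
    by_cases hex : ∃ p', ImmSucc T p p' ∧ (bQry q T p, b) ∈ p'.val
    · rw [dif_pos hex] at h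
      exact le_trans hex.choose_spec.1.2.1.le (ih h)
    · rw [dif_neg hex] at h; cases h

lemma bGo_mem {M : List A} {p v : FPF A} (hp : p ∈ T) (h : bGo q T M p = some v) : v ∈ T := by
  induction M generalizing p with
  | nil => exact (Option.some.inj h) ▸ hp
  | cons b M ih =>
    rw [bGo_cons] at h
    by_cases hex : ∃ p', ImmSucc T p p' ∧ (bQry q T p, b) ∈ p'.val
    · rw [dif_pos hex] at h
      exact ih hex.choose_spec.1.1 h
    · rw [dif_neg hex] at h; cases h

lemma bGo_append (M M' : List A) (p : FPF A) :
    bGo q T (M ++ M') p = (bGo q T M p).bind (bGo q T M') := by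
  induction M generalizing p with
  | nil => simp [bGo_nil]
  | cons b M ih =>
    rw [List.cons_append, bGo_cons, bGo_cons]
    by_cases hex : ∃ p', ImmSucc T p p' ∧ (bQry q T p, b) ∈ p'.val
    · rw [dif_pos hex, dif_pos hex, ih]
    · rw [dif_neg hex, dif_neg hex]; rfl

lemma bGo_take {M : List A} {p v : FPF A} (h : bGo q T M p = some v) (j : ℕ) :
    ∃ pj, bGo q T (M.take j) p = some pj ∧ bGo q T (M.drop j) pj = some v := by
  have hd := bGo_append q T (M.take j) (M.drop j) p
  rw [List.take_append_drop, h] at hd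
  cases hgo : bGo q T (M.take j) p with
  | none => rw [hgo] at hd; simp at hd
  | some pj =>
    rw [hgo] at hd
    simp only [Option.bind_some] at hd
    exact ⟨pj, rfl, hd.symm⟩

lemma imm_sub (hT : IsSeqTree T) {p p₁ p₂ : FPF A} (hp : p ∈ T) {b : A}
    (h1 : ImmSucc T p p₁) (h2 : ImmSucc T p p₂)
    (hb1 : (bQry q T p, b) ∈ p₁.val) (hb2 : (bQry q T p, b) ∈ p₂.val) : p₁.val ⊆ p₂.val := by
  have hnl : ¬IsLeaf T p := fun hl => hl.2 ⟨p₁, h1.1, h1.2.1⟩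
  have hq := bQry_spec q T (hT.2 p hp hnl)
  rintro ⟨x, y⟩ hxy
  have hxd : x ∈ FPF.dom p₁ := ⟨(x, y), hxy, rfl⟩
  rw [hq.2 p₁ h1, Set.mem_insert_iff] at hxd
  rcases hxd with rfl | hxd
  · have : y = b := p₁.2.1 hxy hb1
    rw [this]; exact hb2
  · exact h2.2.1.le (fpf_pair_mem_of_dom h1.2.1.le hxd hxy)

lemma imm_uniq (hT : IsSeqTree T) {p p₁ p₂ : FPF A} (hp : p ∈ T) {b : A}
    (h1 : ImmSucc T p p₁) (h2 : ImmSucc T p p₂)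
    (hb1 : (bQry q T p, b) ∈ p₁.val) (hb2 : (bQry q T p, b) ∈ p₂.val) : p₁ = p₂ :=
  Subtype.ext (Set.Subset.antisymm (imm_sub q T hT hp h1 h2 hb1 hb2)
    (imm_sub q T hT hp h2 h1 hb2 hb1))

def bStep (o : Option (FPF A)) : Option A :=
  match o with
  | none => none
  | some p => if IsLeaf T p then (F p).map (fun c => code [r, c]) else some (code [q, bQry q T p])

def bAlpha (x : A) : Option A :=
  if hx : ∃ L, code L = x then bStep code q r T F (bGo q T hx.choose (FPF.empty A)) else none

lemma bStep_some (p : FPF A) :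
    bStep code q r T F (some p) =
      if IsLeaf T p then (F p).map (fun c => code [r, c]) else some (code [q, bQry q T p]) := rfl

lemma bAlpha_code (hcode : Function.Injective code) (L : List A) :
    bAlpha code q r T F (code L) = bStep code q r T F (bGo q T L (FPF.empty A)) := by
  have hx : ∃ L', code L' = code L := ⟨L, rfl⟩
  rw [bAlpha, dif_pos hx, hcode hx.choose_spec]

lemma exists_immsucc_le (hT : IsSeqTree T) {p v : FPF A} (hv : v ∈ T) (hlt : p < v) :
    ∃ m, ImmSucc T p m ∧ m ≤ v := by
  have hSfin : {t : FPF A | t ∈ T ∧ p < t ∧ t ≤ v}.Finite := by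
    have h1 : {s : Set (A × A) | s ⊆ v.val}.Finite := v.2.2.finite_subsets
    have h2 : {t : FPF A | t ∈ T ∧ p < t ∧ t ≤ v} ⊆ Subtype.val ⁻¹' {s | s ⊆ v.val} :=
      fun t ht => ht.2.2
    exact ((h1.preimage (Subtype.val_injective.injOn)).subset h2)
  have hSne : {t : FPF A | t ∈ T ∧ p < t ∧ t ≤ v}.Nonempty := ⟨v, hv, hlt, le_refl v⟩
  obtain ⟨m, hmS, hmin⟩ := Finset.exists_min_image hSfin.toFinset (fun t => t.val.ncard)
    (by rwa [Set.Finite.toFinset_nonempty])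
  rw [Set.Finite.mem_toFinset] at hmS
  refine ⟨m, ⟨hmS.1, hmS.2.1, ?_⟩, hmS.2.2⟩
  rintro ⟨t, htT, hpt, htm⟩
  have htS : t ∈ {t : FPF A | t ∈ T ∧ p < t ∧ t ≤ v} := ⟨htT, hpt, le_trans htm.le hmS.2.2⟩
  have hmint := hmin t (hSfin.mem_toFinset.mpr htS)
  have hss : t.val ⊂ m.val := by rw [Set.ssubset_iff_subset_ne]; exact fpf_lt_iff.mp htm
  have := Set.ncard_lt_ncard hss m.2.2
  omega

lemma bPath (hT : IsSeqTree T) {v : FPF A} (hv : v ∈ T) :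
    ∀ n (p : FPF A), p ∈ T → p ≤ v → v.val.ncard - p.val.ncard ≤ n →
      ∃ M, bGo q T M p = some v := by
  intro n
  induction n with
  | zero =>
    intro p hp hle hcard
    rcases eq_or_lt_of_le hle with heq | hlt
    · exact ⟨[], by rw [bGo_nil, heq]⟩
    · have hss : p.val ⊂ v.val := by rw [Set.ssubset_iff_subset_ne]; exact fpf_lt_iff.mp hlt
      have := Set.ncard_lt_ncard hss v.2.2
      omega
  | succ n ih =>
    intro p hp hle hcard
    rcases eq_or_lt_of_le hle with heq | hlt
    · exact ⟨[], by rw [bGo_nil, heq]⟩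
    · obtain ⟨m, hmi, hmv⟩ := exists_immsucc_le T hT hv hlt
      have hnl : ¬IsLeaf T p := fun hl => hl.2 ⟨v, hv, hlt⟩
      have hq := bQry_spec q T (hT.2 p hp hnl)
      have hdom := hq.2 m hmi
      have hbq : bQry q T p ∈ FPF.dom m := by rw [hdom]; exact Set.mem_insert _ _
      obtain ⟨xb, hmem, hxe⟩ := hbq
      have hmem' : (bQry q T p, xb.2) ∈ m.val := by rw [← hxe, Prod.mk.eta]; exact hmem
      have hex : ∃ p', ImmSucc T p p' ∧ (bQry q T p, xb.2) ∈ p'.val := ⟨m, hmi, hmem'⟩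
      have hchoose : hex.choose = m :=
        imm_uniq q T hT hp hex.choose_spec.1 hmi hex.choose_spec.2 hmem'
      have hpm : p.val ⊂ m.val := by rw [Set.ssubset_iff_subset_ne]; exact fpf_lt_iff.mp hmi.2.1
      have h1 := Set.ncard_lt_ncard hpm m.2.2
      have h2 : m.val.ncard ≤ v.val.ncard := Set.ncard_le_ncard (fpf_le_iff.mp hmv) v.2.2
      obtain ⟨M, hM⟩ := ih m hmi.1 hmv (by omega)
      refine ⟨xb.2 :: M, ?_⟩
      rw [bGo_cons, dif_pos hex, hchoose]
      exact hM

theorem part2 (hcode : Function.Injective code) (hqr : q ≠ r) (hT : IsSeqTree T)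
    (Φ : (A → Option A) → Option A)
    (hΦ : ∀ β b, Φ β = some b ↔ ∃ v, IsLeaf T v ∧ agreesP β v ∧ F v = some b) :
    ∀ (β : A → Option A) (b : A),
      Φ β = some b ↔
        phiPRel code (fun x => code [q, x]) (fun x => code [r, x]) (bAlpha code q r T F) β b := by
  intro β b
  constructor
  · intro h
    obtain ⟨v, hleaf, hag, hFv⟩ := (hΦ β b).mp h
    obtain ⟨M, hM⟩ := bPath q T hT hleaf.1 (v.val.ncard) (FPF.empty A) hT.1.1
      (hT.1.2.1 v hleaf.1) (by exact Nat.sub_le _ _)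
    refine ⟨M, ?_, ?_⟩
    · intro j hj
      obtain ⟨pj, hgoj, hdropj⟩ := bGo_take q T hM j
      rw [← List.getElem_cons_drop hj, bGo_cons] at hdropj
      by_cases hex : ∃ p', ImmSucc T pj p' ∧ (bQry q T pj, M[j]) ∈ p'.val
      · rw [dif_pos hex] at hdropj
        obtain ⟨himm, hmem⟩ := hex.choose_spec
        have hnl : ¬IsLeaf T pj := fun hl => hl.2 ⟨hex.choose, himm.1, himm.2.1⟩
        refine ⟨bQry q T pj, ?_, ?_⟩
        · rw [bAlpha_code code q r T F hcode, hgoj, bStep_some, if_neg hnl]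
        · exact hag ((bGo_le q T hdropj) hmem)
      · rw [dif_neg hex] at hdropj; cases hdropj
    · show bAlpha code q r T F (code M) = some (code [r, b])
      rw [bAlpha_code code q r T F hcode, hM, bStep_some, if_pos hleaf, hFv]
      rfl
  · rintro ⟨L, hInt, hres⟩
    have hstep : ∀ (N : List A) (x : A), bAlpha code q r T F (code N) = some x →
        ∃ p, bGo q T N (FPF.empty A) = some p ∧
          ((IsLeaf T p ∧ ∃ c, F p = some c ∧ x = code [r, c]) ∨
            (¬IsLeaf T p ∧ x = code [q, bQry q T p])) := by
      intro N x hx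
      rw [bAlpha_code code q r T F hcode] at hx
      cases hgo : bGo q T N (FPF.empty A) with
      | none => rw [hgo] at hx; cases hx
      | some p =>
        rw [hgo, bStep_some] at hx
        by_cases hl : IsLeaf T p
        · rw [if_pos hl] at hx
          obtain ⟨c, hc, hcx⟩ := Option.map_eq_some_iff.mp hx
          exact ⟨p, rfl, Or.inl ⟨hl, c, hc, hcx.symm⟩⟩
        · rw [if_neg hl] at hx
          exact ⟨p, rfl, Or.inr ⟨hl, (Option.some.inj hx).symm⟩⟩
    have hq' : ∀ j (hj : j < L.length), ∃ pj,
        bGo q T (L.take j) (FPF.empty A) = some pj ∧ ¬IsLeaf T pj ∧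
          β (bQry q T pj) = some (L[j]'hj) := by
      intro j hj
      obtain ⟨bj, hα, hβ⟩ := hInt j hj
      obtain ⟨pj, hgo, hcase⟩ := hstep (L.take j) (code [q, bj]) hα
      rcases hcase with ⟨hl, c, hc, hcx⟩ | ⟨hnl, hx⟩
      · have := hcode hcx
        simp only [List.cons.injEq] at this
        exact absurd this.1 hqr
      · have hbj : bj = bQry q T pj := by
          have := hcode hx
          simp only [List.cons.injEq] at this
          exact this.2.1
        exact ⟨pj, hgo, hnl, by rw [← hbj]; exact hβ⟩
    have hresL : bAlpha code q r T F (code L) = some (code [r, b]) := hres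
    obtain ⟨v, hgoL, hcase⟩ := hstep L (code [r, b]) hresL
    rcases hcase with ⟨hl, c, hc, hcx⟩ | ⟨hnl, hx⟩
    · have hcb : c = b := by
        have := hcode hcx
        simp only [List.cons.injEq] at this
        exact this.2.1.symm
      have hagree : ∀ j, j ≤ L.length → ∀ pj,
          bGo q T (L.take j) (FPF.empty A) = some pj → agreesP β pj := by
        intro j
        induction j with
        | zero =>
          intro _ pj hgo
          rw [List.take_zero, bGo_nil] at hgo
          have : FPF.empty A = pj := Option.some.inj hgo
          rw [← this]
          exact fun a b' hab => absurd hab (Set.notMem_empty _)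
        | succ j ihj =>
          intro hj1 pj1 hgo1
          have hj : j < L.length := by omega
          obtain ⟨pj, hgoj, hnlj, hβ⟩ := hq' j hj
          have htke : L.take (j + 1) = L.take j ++ [L[j]] := by
            rw [List.take_succ, List.getElem?_eq_getElem hj]; rfl
          rw [htke, bGo_append, hgoj] at hgo1
          simp only [Option.bind_some] at hgo1
          rw [bGo_cons] at hgo1
          by_cases hex : ∃ p', ImmSucc T pj p' ∧ (bQry q T pj, L[j]) ∈ p'.val
          · rw [dif_pos hex, bGo_nil] at hgo1
            obtain ⟨himm, hmem⟩ := hex.choose_spec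
            have hpj1 : hex.choose = pj1 := Option.some.inj hgo1
            rw [hpj1] at himm hmem
            have hIH := ihj (by omega) pj hgoj
            have hpjT : pj ∈ T := bGo_mem q T hT.1.1 hgoj
            have hspec := bQry_spec q T (hT.2 pj hpjT hnlj)
            have hdom := hspec.2 pj1 himm
            intro x y hxy
            have hx : x ∈ FPF.dom pj1 := ⟨(x, y), hxy, rfl⟩
            rw [hdom, Set.mem_insert_iff] at hx
            rcases hx with rfl | hx
            · have : y = L[j] := pj1.2.1 hxy hmem
              rw [this]; exact hβ
            · exact hIH (fpf_pair_mem_of_dom himm.2.1.le hx hxy)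
          · rw [dif_neg hex] at hgo1; cases hgo1
      have hagv : agreesP β v :=
        hagree L.length (le_refl _) v (by rwa [List.take_length])
      exact (hΦ β b).mpr ⟨v, hl, hagv, by rw [hc, hcb]⟩
    · have := hcode hx
      simp only [List.cons.injEq] at this
      exact absurd this.1 (Ne.symm hqr)

end Part2

/-! #### Part 1 : from an `α` to a sequential tree -/

section Part1

variable (code : List A → A) (q r : A) (α : A → Option A)

def aQ (L : List A) (a : A) : Prop := α (code L) = some (code [q, a])

def aR (L : List A) (c : A) : Prop := α (code L) = some (code [r, c])

def aGood (L : List A) : Prop :=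
  (∀ j, j < L.length → ∃ a, aQ code q α (L.take j) a) ∧
  ∀ i j a (hi : i < L.length) (hj : j < L.length),
    aQ code q α (L.take i) a → aQ code q α (L.take j) a → L[i] = L[j]

def aSgr (L : List A) : Set (A × A) :=
  {xy | ∃ j, ∃ hj : j < L.length, aQ code q α (L.take j) xy.1 ∧ xy.2 = L[j]}

def aT : Set (FPF A) := {p | ∃ L, aGood code q α L ∧ p.val = aSgr code q α L}

def aF (p : FPF A) : Option A :=
  if h : ∃ c, ∃ L, aGood code q α L ∧ p.val = aSgr code q α L ∧ aR code r α L c then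
    some h.choose
  else none

variable {code q r α}

lemma aQ_def {L a} : aQ code q α L a ↔ α (code L) = some (code [q, a]) := Iff.rfl

lemma aR_def {L c} : aR code r α L c ↔ α (code L) = some (code [r, c]) := Iff.rfl

lemma aSgr_mem {L : List A} {x y : A} :
    (x, y) ∈ aSgr code q α L ↔ ∃ j, ∃ hj : j < L.length, aQ code q α (L.take j) x ∧ y = L[j] :=
  Iff.rfl

lemma aQ_unique (hcode : Function.Injective code) {L : List A} {a a' : A}
    (h : aQ code q α L a) (h' : aQ code q α L a') : a = a' := by
  rw [aQ_def] at h h'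
  rw [h] at h'
  have := hcode (Option.some.inj h')
  simpa using this

lemma aQR_clash (hcode : Function.Injective code) (hqr : q ≠ r) {L : List A} {a c : A}
    (h : aQ code q α L a) (h' : aR code r α L c) : False := by
  rw [aQ_def] at h
  rw [aR_def] at h'
  rw [h] at h'
  have := hcode (Option.some.inj h')
  simp only [List.cons.injEq] at this
  exact hqr this.1

lemma aR_unique (hcode : Function.Injective code) {L : List A} {c c' : A}
    (h : aR code r α L c) (h' : aR code r α L c') : c = c' := by
  rw [aR_def] at h h'
  rw [h] at h'
  have := hcode (Option.some.inj h')
  simpa using this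

lemma aSgr_func {L : List A} (hL : aGood code q α L) :
    ∀ ⦃x y y' : A⦄, (x, y) ∈ aSgr code q α L → (x, y') ∈ aSgr code q α L → y = y' := by
  intro x y y' hy hy'
  obtain ⟨i, hi, hqi, hyi⟩ := hy
  obtain ⟨j, hj, hqj, hyj⟩ := hy'
  have hyi' : y = L[i] := hyi
  have hyj' : y' = L[j] := hyj
  rw [hyi', hyj']
  exact hL.2 i j x hi hj hqi hqj

lemma aSgr_finite (hcode : Function.Injective code) {L : List A} :
    (aSgr code q α L).Finite := by
  have hsub : aSgr code q α L ⊆ Set.range (fun j : Fin L.length =>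
      ((if h : ∃ a, aQ code q α (L.take j.1) a then h.choose else q), L[j.1])) := by
    rintro ⟨x, y⟩ ⟨j, hj, hqj, hyj⟩
    refine ⟨⟨j, hj⟩, ?_⟩
    have hex : ∃ a, aQ code q α (L.take j) a := ⟨x, hqj⟩
    simp only
    rw [dif_pos hex, aQ_unique hcode hex.choose_spec hqj, ← hyj]
  exact (Set.finite_range _).subset hsub

lemma take_eq_succ {L L' : List A} {j : ℕ} (hj : j < L.length) (hj' : j < L'.length)
    (h : L.take j = L'.take j) (he : L[j] = L'[j]) : L.take (j + 1) = L'.take (j + 1) := by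
  rw [List.take_succ, List.take_succ, h, List.getElem?_eq_getElem hj,
    List.getElem?_eq_getElem hj', he]

lemma pref_getElem {L N : List A} (h : L = N.take L.length) {j : ℕ}
    (hj : j < L.length) (hjN : j < N.length) : L[j] = N[j] := by
  have h1 := List.getElem_of_eq h hj
  rwa [List.getElem_take] at h1

lemma getElem_step (hcode : Function.Injective code) {L L' : List A}
    (hL : aGood code q α L) (hL' : aGood code q α L')
    (hsub : aSgr code q α L ⊆ aSgr code q α L') {j : ℕ} (hj : j < L.length)
    (hj' : j < L'.length) (hpre : L.take j = L'.take j) : L[j] = L'[j] := by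
  obtain ⟨a, ha⟩ := hL.1 j hj
  have ha' : aQ code q α (L'.take j) a := by rwa [hpre] at ha
  have h1 : (a, L[j]) ∈ aSgr code q α L := ⟨j, hj, ha, rfl⟩
  have h2 : (a, L'[j]) ∈ aSgr code q α L' := ⟨j, hj', ha', rfl⟩
  exact aSgr_func hL' (hsub h1) h2

lemma take_eq (hcode : Function.Injective code) {L L' : List A}
    (hL : aGood code q α L) (hL' : aGood code q α L')
    (hsub : aSgr code q α L ⊆ aSgr code q α L') :
    ∀ m, m ≤ L.length → m ≤ L'.length → L.take m = L'.take m := by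
  intro m
  induction m with
  | zero => simp
  | succ j ih =>
    intro h1 h2
    exact take_eq_succ (by omega) (by omega) (ih (by omega) (by omega))
      (getElem_step hcode hL hL' hsub (by omega) (by omega) (ih (by omega) (by omega)))

lemma prefix_of_sub (hcode : Function.Injective code) {L L' : List A}
    (hL : aGood code q α L) (hL' : aGood code q α L')
    (hsub : aSgr code q α L ⊆ aSgr code q α L') (hlen : L.length ≤ L'.length) :
    L = L'.take L.length := by
  have := take_eq hcode hL hL' hsub L.length (le_refl _) hlen
  rwa [List.take_length] at this

lemma sgr_take_sub {L : List A} {m : ℕ} :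
    aSgr code q α (L.take m) ⊆ aSgr code q α L := by
  rintro ⟨x, y⟩ ⟨j, hj, hqj, hyj⟩
  have hjlen : j < L.length := by rw [List.length_take] at hj; omega
  have hjm : j ≤ m := by rw [List.length_take] at hj; omega
  refine ⟨j, hjlen, ?_, ?_⟩
  · rwa [List.take_take, min_eq_left hjm] at hqj
  · rwa [List.getElem_take] at hyj

lemma aGood_take {L : List A} {m : ℕ} (hL : aGood code q α L) :
    aGood code q α (L.take m) := by
  constructor
  · intro j hj
    rw [List.length_take] at hj
    obtain ⟨a, ha⟩ := hL.1 j (by omega)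
    exact ⟨a, by rwa [List.take_take, min_eq_left (by omega : j ≤ m)]⟩
  · intro i j a hi hj h1 h2
    rw [List.length_take] at hi hj
    rw [List.take_take, min_eq_left (by omega : i ≤ m)] at h1
    rw [List.take_take, min_eq_left (by omega : j ≤ m)] at h2
    have := hL.2 i j a (by omega) (by omega) h1 h2
    simpa [List.getElem_take] using this

lemma sub_cases (hcode : Function.Injective code) {L L' : List A}
    (hL : aGood code q α L) (hL' : aGood code q α L')
    (hsub : aSgr code q α L ⊆ aSgr code q α L') :
    (L.length ≤ L'.length ∧ L = L'.take L.length) ∨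
      (L'.length < L.length ∧ L' = L.take L'.length ∧ aSgr code q α L = aSgr code q α L') := by
  rcases le_or_gt L.length L'.length with h | h
  · exact Or.inl ⟨h, prefix_of_sub hcode hL hL' hsub h⟩
  · have hpre : L' = L.take L'.length := by
      have := take_eq hcode hL hL' hsub L'.length (le_of_lt h) (le_refl _)
      rw [List.take_length] at this
      exact this.symm
    refine Or.inr ⟨h, hpre, Set.Subset.antisymm hsub ?_⟩
    rw [hpre]
    exact sgr_take_sub

lemma aGood_nil : aGood code q α [] :=
  ⟨fun j hj => absurd hj (by simp), fun i j a hi => absurd hi (by simp)⟩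

lemma aSgr_nil : aSgr code q α ([] : List A) = ∅ := by
  ext ⟨x, y⟩
  simp [aSgr]

lemma empty_mem_aT : FPF.empty A ∈ aT code q α :=
  ⟨[], aGood_nil, by rw [aSgr_nil]; rfl⟩

lemma aT_tree (hcode : Function.Injective code) :
    IsTreeOn (FPF.empty A) (aT code q α) := by
  refine ⟨empty_mem_aT, fun p hp => ?_, fun p hp => ?_⟩
  · exact fpf_le_iff.mpr (fun z hz => absurd hz (Set.notMem_empty z))
  · obtain ⟨L₀, hL₀, hp₀⟩ := hp
    rintro t ⟨⟨L, hL, hpv⟩, hle⟩ t' ⟨⟨L', hL', hpv'⟩, hle'⟩ hne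
    have hsub : aSgr code q α L ⊆ aSgr code q α L₀ := by
      rw [← hpv, ← hp₀]; exact fpf_le_iff.mp hle
    have hsub' : aSgr code q α L' ⊆ aSgr code q α L₀ := by
      rw [← hpv', ← hp₀]; exact fpf_le_iff.mp hle'
    rcases sub_cases hcode hL hL₀ hsub with ⟨hlen, hpre⟩ | ⟨_, _, heq⟩
    · rcases sub_cases hcode hL' hL₀ hsub' with ⟨hlen', hpre'⟩ | ⟨_, _, heq'⟩
      · rcases le_total L.length L'.length with hll | hll
        · left
          show t ≤ t'
          rw [fpf_le_iff, hpv, hpv']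
          have : L = L'.take L.length := by
            rw [hpre', List.take_take, min_eq_left hll]
            exact hpre
          rw [this]
          exact sgr_take_sub
        · right
          show t' ≤ t
          rw [fpf_le_iff, hpv, hpv']
          have : L' = L.take L'.length := by
            rw [hpre, List.take_take, min_eq_left hll]
            exact hpre'
          rw [this]
          exact sgr_take_sub
      · left
        show t ≤ t'
        rw [fpf_le_iff, hpv, hpv', heq']
        exact hsub
    · right
      show t' ≤ t
      rw [fpf_le_iff, hpv', hpv, heq]
      exact hsub'

def aForced (L N : List A) : Prop :=
  L = N.take L.length ∧ L.length ≤ N.length ∧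
  ∀ j (hj : j < N.length), L.length ≤ j →
    ∃ a, aQ code q α (N.take j) a ∧ (a, N[j]) ∈ aSgr code q α L

lemma forced_take_eq (hcode : Function.Injective code) {L N N' : List A}
    (hL : aGood code q α L)
    (hF : aForced (code := code) (q := q) (α := α) L N)
    (hF' : aForced (code := code) (q := q) (α := α) L N')
    (hlen : N.length ≤ N'.length) : N = N'.take N.length := by
  have key : ∀ m, m ≤ N.length → N.take m = N'.take m := by
    intro m
    induction m with
    | zero => simp
    | succ j ih =>
      intro hm
      have hj : j < N.length := by omega
      have hj' : j < N'.length := by omega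
      have hpre := ih (by omega)
      refine take_eq_succ hj hj' hpre ?_
      rcases lt_or_ge j L.length with hjL | hjL
      · have e1 : L[j] = N[j] := pref_getElem hF.1 hjL hj
        have e2 : L[j] = N'[j] := pref_getElem hF'.1 hjL hj'
        rw [← e1, ← e2]
      · obtain ⟨a, haq, hamem⟩ := hF.2.2 j hj hjL
        obtain ⟨a', haq', hamem'⟩ := hF'.2.2 j hj' hjL
        rw [← hpre] at haq'
        have haa : a' = a := aQ_unique hcode haq' haq
        rw [haa] at hamem'
        exact aSgr_func hL hamem hamem'
  have := key N.length (le_refl _)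
  rwa [List.take_length] at this

lemma newquery_not_lt (hcode : Function.Injective code) {L N N' : List A} {a : A}
    (hL : aGood code q α L)
    (hF : aForced (code := code) (q := q) (α := α) L N)
    (hF' : aForced (code := code) (q := q) (α := α) L N')
    (ha : aQ code q α N a) (hnd : a ∉ Prod.fst '' aSgr code q α L)
    (hlt : N.length < N'.length) : False := by
  have hpre := forced_take_eq hcode hL hF hF' (le_of_lt hlt)
  obtain ⟨a', haq', hmem'⟩ := hF'.2.2 N.length hlt hF.2.1
  rw [← hpre] at haq'
  have : a' = a := aQ_unique hcode haq' ha
  rw [this] at hmem'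
  exact hnd ⟨(a, N'[N.length]), hmem', rfl⟩

lemma newquery_unique (hcode : Function.Injective code) {L N N' : List A} {a a' : A}
    (hL : aGood code q α L)
    (hF : aForced (code := code) (q := q) (α := α) L N)
    (hF' : aForced (code := code) (q := q) (α := α) L N')
    (ha : aQ code q α N a) (ha' : aQ code q α N' a')
    (hnd : a ∉ Prod.fst '' aSgr code q α L) (hnd' : a' ∉ Prod.fst '' aSgr code q α L) :
    a = a' := by
  rcases lt_trichotomy N.length N'.length with h | h | h
  · exact absurd (newquery_not_lt hcode hL hF hF' ha hnd h) not_false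
  · have hNN : N = N' := by
      have := forced_take_eq hcode hL hF hF' (le_of_eq h)
      rwa [h, List.take_length] at this
    rw [hNN] at ha
    exact aQ_unique hcode ha ha'
  · exact absurd (newquery_not_lt hcode hL hF' hF ha' hnd' h) not_false

lemma run_analysis (hcode : Function.Injective code) {L M : List A}
    (hL : aGood code q α L) (hM : aGood code q α M)
    (hpre : L = M.take L.length) (hsub : aSgr code q α L ⊆ aSgr code q α M)
    (hne : aSgr code q α L ≠ aSgr code q α M) :
    ∃ N a b, aGood code q α N ∧ aForced (code := code) (q := q) (α := α) L N ∧
      aQ code q α N a ∧ a ∉ Prod.fst '' aSgr code q α L ∧ aGood code q α (N ++ [b]) ∧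
      aSgr code q α (N ++ [b]) = insert (a, b) (aSgr code q α L) ∧
      aSgr code q α (N ++ [b]) ⊆ aSgr code q α M := by
  have htkL : ∀ j, j ≤ L.length → L.take j = M.take j := by
    intro j hj
    rw [hpre, List.take_take, min_eq_left hj]
  obtain ⟨⟨x, y⟩, hxyM, hxyL⟩ := Set.exists_of_ssubset (Set.ssubset_iff_subset_ne.mpr ⟨hsub, hne⟩)
  have hxdom : x ∉ Prod.fst '' aSgr code q α L := by
    rintro ⟨⟨x', z⟩, hz, hzx⟩
    cases hzx
    have : y = z := aSgr_func hM hxyM (hsub hz)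
    rw [this] at hxyL
    exact hxyL hz
  obtain ⟨j', hj', hq', hy'⟩ := hxyM
  have hj'L : L.length ≤ j' := by
    by_contra hlt
    push_neg at hlt
    apply hxdom
    refine ⟨(x, L[j']), ⟨j', hlt, ?_, rfl⟩, rfl⟩
    rwa [htkL j' (le_of_lt hlt)]
  have hP : ∃ j, j < M.length ∧ L.length ≤ j ∧
      ∃ a, aQ code q α (M.take j) a ∧ a ∉ Prod.fst '' aSgr code q α L :=
    ⟨j', hj', hj'L, x, hq', hxdom⟩
  obtain ⟨hj₀M, hj₀L, a, haq, hand⟩ := Nat.find_spec hP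
  set j₀ := Nat.find hP with hj₀
  have hforced : ∀ j (hjM : j < M.length), L.length ≤ j → j < j₀ → ∀ a',
      aQ code q α (M.take j) a' → (a', M[j]'hjM) ∈ aSgr code q α L := by
    intro j hjM hLj hjj a' ha'
    have hnP := Nat.find_min hP hjj
    push_neg at hnP
    have hdom := hnP hjM hLj a' ha'
    obtain ⟨⟨a'', z⟩, hz, he⟩ := hdom
    cases he
    have h1 : (a'', M[j]'hjM) ∈ aSgr code q α M := ⟨j, hjM, ha', rfl⟩
    have h2 : M[j]'hjM = z := aSgr_func hM h1 (hsub hz)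
    rw [h2]
    exact hz
  set N := M.take j₀ with hN
  have hNlen : N.length = j₀ := by rw [hN, List.length_take]; omega
  have hgoodN : aGood code q α N := aGood_take hM
  have hNpre : L = N.take L.length := by
    rw [hN, List.take_take, min_eq_left hj₀L]
    exact hpre
  have htkN : ∀ j, j ≤ j₀ → N.take j = M.take j := by
    intro j hj
    rw [hN, List.take_take, min_eq_left hj]
  have hgetN : ∀ j (hj : j < j₀), N[j]'(by omega) = M[j]'(by omega) := by
    intro j hj
    show (M.take j₀)[j]'(by rw [List.length_take]; omega) = M[j]'(by omega)
    exact List.getElem_take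
  have hforcedN : aForced (code := code) (q := q) (α := α) L N := by
    refine ⟨hNpre, by omega, ?_⟩
    intro j hj hLj
    rw [hNlen] at hj
    obtain ⟨a', ha'⟩ := hM.1 j (by omega)
    refine ⟨a', by rwa [htkN j (le_of_lt hj)], ?_⟩
    have h2 := hforced j (by omega) hLj hj a' ha'
    rwa [← hgetN j hj] at h2
  have haqN : aQ code q α N a := by rw [hN]; exact haq
  set b := M[j₀]'hj₀M with hb
  have hNb : N ++ [b] = M.take (j₀ + 1) := by
    rw [List.take_succ, List.getElem?_eq_getElem hj₀M]
    rfl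
  have hgoodNb : aGood code q α (N ++ [b]) := by rw [hNb]; exact aGood_take hM
  have hsubNb : aSgr code q α (N ++ [b]) ⊆ aSgr code q α M := by
    rw [hNb]
    exact sgr_take_sub
  have htkNb : (N ++ [b]).take j₀ = N := by
    rw [List.take_append_of_le_length (le_of_eq hNlen.symm), ← hNlen, List.take_length]
  have hSgrN : aSgr code q α N = aSgr code q α L := by
    apply Set.Subset.antisymm
    · rintro ⟨u, w⟩ ⟨j, hj, hqj, hwj⟩
      rw [hNlen] at hj
      have hww : w = M[j]'(by omega) := by
        have h3 : w = N[j]'(by omega) := hwj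
        rw [hgetN j hj] at h3
        exact h3
      rcases lt_or_ge j L.length with hjL | hjL
      · refine ⟨j, hjL, ?_, ?_⟩
        · rw [htkL j (le_of_lt hjL)]
          rwa [htkN j (le_of_lt hj)] at hqj
        · show w = L[j]
          rw [hww]
          exact (pref_getElem hpre hjL (by omega)).symm
      · have hqM : aQ code q α (M.take j) u := by rwa [htkN j (le_of_lt hj)] at hqj
        have h2 := hforced j (by omega) hjL hj u hqM
        show (u, w) ∈ aSgr code q α L
        rw [hww]
        exact h2
    · have h := sgr_take_sub (code := code) (q := q) (α := α) (L := N) (m := L.length)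
      rwa [← hNpre] at h
  have hSgrNb : aSgr code q α (N ++ [b]) = insert (a, b) (aSgr code q α L) := by
    ext ⟨u, w⟩
    simp only [Set.mem_insert_iff]
    constructor
    · rintro ⟨j, hj, hqj, hwj⟩
      have hqj' : aQ code q α ((N ++ [b]).take j) u := hqj
      rw [List.length_append, List.length_cons, List.length_nil, hNlen] at hj
      have hwj' : w = (N ++ [b])[j]'(by simp [hNlen]; omega) := hwj
      rcases Nat.lt_succ_iff_lt_or_eq.mp hj with hjlt | hjeq
      · right
        have htk : (N ++ [b]).take j = N.take j := by
          rw [List.take_append_of_le_length (by omega)]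
        have hg : (N ++ [b])[j]'(by simp [hNlen]; omega) = N[j]'(by omega) :=
          List.getElem_append_left (by omega)
        rw [htk] at hqj'
        rw [hg] at hwj'
        have hmem : (u, w) ∈ aSgr code q α N := ⟨j, by omega, hqj', hwj'⟩
        rw [← hSgrN]
        exact hmem
      · left
        subst hjeq
        rw [htkNb] at hqj'
        have hu : u = a := aQ_unique hcode hqj' haqN
        have hw : w = b := by
          rw [hwj']
          exact List.getElem_concat_length hNlen.symm _
        rw [hu, hw]
    · rintro (heq | hmem)
      · obtain ⟨rfl, rfl⟩ := Prod.mk.injEq .. |>.mp heq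
        refine ⟨j₀, by simp [hNlen], ?_, ?_⟩
        · rw [htkNb]
          exact haqN
        · exact (List.getElem_concat_length hNlen.symm _).symm
      · have h1 : (u, w) ∈ aSgr code q α N := by rw [hSgrN]; exact hmem
        have h2 : aSgr code q α N ⊆ aSgr code q α (N ++ [b]) := by
          have h := sgr_take_sub (code := code) (q := q) (α := α) (L := N ++ [b]) (m := N.length)
          rwa [List.take_left] at h
        exact h2 h1
  exact ⟨N, a, b, hgoodN, hforcedN, haqN, hand, hgoodNb, hSgrNb, hsubNb⟩

lemma aT_succ (hcode : Function.Injective code) :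
    ∀ p ∈ aT code q α, ¬IsLeaf (aT code q α) p →
      ∃ a ∉ FPF.dom p, ∀ p', ImmSucc (aT code q α) p p' →
        FPF.dom p' = insert a (FPF.dom p) := by
  intro p hp hnl
  obtain ⟨L, hL, hpv⟩ := hp
  rw [IsLeaf] at hnl
  push_neg at hnl
  obtain ⟨p₁, hp₁T, hp₁lt⟩ := hnl ⟨L, hL, hpv⟩
  obtain ⟨L₁, hL₁, hp₁v⟩ := hp₁T
  have hsub1 : aSgr code q α L ⊆ aSgr code q α L₁ := by
    rw [← hpv, ← hp₁v]; exact (fpf_lt_iff.mp hp₁lt).1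
  have hne1 : aSgr code q α L ≠ aSgr code q α L₁ := by
    rw [← hpv, ← hp₁v]; exact (fpf_lt_iff.mp hp₁lt).2
  have hpre1 : L = L₁.take L.length := by
    rcases sub_cases hcode hL hL₁ hsub1 with ⟨_, h⟩ | ⟨_, _, h⟩
    · exact h
    · exact absurd h hne1
  obtain ⟨N₁, a₁, b₁, hgN₁, hF₁, haq₁, hand₁, -, -, -⟩ :=
    run_analysis hcode hL hL₁ hpre1 hsub1 hne1
  refine ⟨a₁, ?_, ?_⟩
  · rw [dom_eq, hpv]
    exact hand₁
  · intro p' himm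
    obtain ⟨L', hL', hp'v⟩ := himm.1
    have hsub' : aSgr code q α L ⊆ aSgr code q α L' := by
      rw [← hpv, ← hp'v]; exact (fpf_lt_iff.mp himm.2.1).1
    have hne' : aSgr code q α L ≠ aSgr code q α L' := by
      rw [← hpv, ← hp'v]; exact (fpf_lt_iff.mp himm.2.1).2
    have hpre' : L = L'.take L.length := by
      rcases sub_cases hcode hL hL' hsub' with ⟨_, h⟩ | ⟨_, _, h⟩
      · exact h
      · exact absurd h hne'
    obtain ⟨N, a, b, hgN, hF, haq, hand, hgNb, hSgrNb, hsubNb⟩ :=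
      run_analysis hcode hL hL' hpre' hsub' hne'
    have haa : a = a₁ := newquery_unique hcode hL hF hF₁ haq haq₁ hand hand₁
    set pplus : FPF A := ⟨aSgr code q α (N ++ [b]), aSgr_func hgNb, aSgr_finite hcode⟩ with hpp
    have hppT : pplus ∈ aT code q α := ⟨N ++ [b], hgNb, rfl⟩
    have hlt1 : p < pplus := by
      rw [fpf_lt_iff]
      constructor
      · show p.val ⊆ aSgr code q α (N ++ [b])
        rw [hpv, hSgrNb]
        exact Set.subset_insert _ _
      · show p.val ≠ aSgr code q α (N ++ [b])
        rw [hpv, hSgrNb]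
        intro hcontra
        exact hand ⟨(a, b), by rw [hcontra]; exact Set.mem_insert _ _, rfl⟩
    have hle2 : pplus ≤ p' := fpf_le_iff.mpr (by rw [hp'v]; exact hsubNb)
    have heq : pplus = p' := by
      by_contra hne2
      exact himm.2.2 ⟨pplus, hppT, hlt1, lt_of_le_of_ne hle2 hne2⟩
    rw [← heq]
    show FPF.dom pplus = insert a₁ (FPF.dom p)
    rw [dom_eq, dom_eq, hpv]
    show Prod.fst '' aSgr code q α (N ++ [b]) = _
    rw [hSgrNb, Set.image_insert_eq, haa]

lemma shorter_not_R (hcode : Function.Injective code) (hqr : q ≠ r) {L L' : List A} {c : A}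
    (hL' : aGood code q α L') (hpre : L = L'.take L.length)
    (hlt : L.length < L'.length) (hR : aR code r α L c) : False := by
  obtain ⟨a, ha⟩ := hL'.1 L.length hlt
  rw [← hpre] at ha
  exact aQR_clash hcode hqr ha hR

lemma aR_node_unique (hcode : Function.Injective code) (hqr : q ≠ r) {L L' : List A} {c c' : A}
    (hL : aGood code q α L) (hL' : aGood code q α L')
    (hSgr : aSgr code q α L = aSgr code q α L')
    (hR : aR code r α L c) (hR' : aR code r α L' c') : c = c' := by
  rcases lt_trichotomy L.length L'.length with h | h | h
  · exact absurd (shorter_not_R hcode hqr hL'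
      (prefix_of_sub hcode hL hL' (le_of_eq hSgr) (le_of_lt h)) h hR) not_false
  · have hLL : L = L' := by
      have := prefix_of_sub hcode hL hL' (le_of_eq hSgr) (le_of_eq h)
      rwa [h, List.take_length] at this
    rw [hLL] at hR
    exact aR_unique hcode hR hR'
  · exact absurd (shorter_not_R hcode hqr hL
      (prefix_of_sub hcode hL' hL (le_of_eq hSgr.symm) (le_of_lt h)) h hR') not_false

lemma result_leaf (hcode : Function.Injective code) (hqr : q ≠ r) {L : List A} {c : A}
    {p : FPF A} (hL : aGood code q α L) (hR : aR code r α L c)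
    (hpv : p.val = aSgr code q α L) (hpT : p ∈ aT code q α) : IsLeaf (aT code q α) p := by
  refine ⟨hpT, ?_⟩
  rintro ⟨p', ⟨L', hL', hp'v⟩, hlt⟩
  have hsub : aSgr code q α L ⊆ aSgr code q α L' := by
    rw [← hpv, ← hp'v]; exact (fpf_lt_iff.mp hlt).1
  have hne : aSgr code q α L ≠ aSgr code q α L' := by
    rw [← hpv, ← hp'v]; exact (fpf_lt_iff.mp hlt).2
  rcases sub_cases hcode hL hL' hsub with ⟨hlen, hpre⟩ | ⟨_, _, heq⟩
  · rcases eq_or_lt_of_le hlen with heql | hltl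
    · have : L = L' := by rwa [heql, List.take_length] at hpre
      rw [this] at hne
      exact hne rfl
    · exact shorter_not_R hcode hqr hL' hpre hltl hR
  · exact hne heq

lemma aF_eq_some (hcode : Function.Injective code) (hqr : q ≠ r) {p : FPF A} {b : A}
    (h : aF code q r α p = some b) :
    ∃ L, aGood code q α L ∧ p.val = aSgr code q α L ∧ aR code r α L b := by
  rw [aF] at h
  by_cases hex : ∃ c, ∃ L, aGood code q α L ∧ p.val = aSgr code q α L ∧ aR code r α L c
  · rw [dif_pos hex] at h
    have hb : hex.choose = b := Option.some.inj h
    obtain ⟨L, h1, h2, h3⟩ := hex.choose_spec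
    exact ⟨L, h1, h2, hb ▸ h3⟩
  · rw [dif_neg hex] at h
    cases h

lemma aF_eq_some_of (hcode : Function.Injective code) (hqr : q ≠ r) {p : FPF A} {b : A}
    {L : List A} (hL : aGood code q α L) (hpv : p.val = aSgr code q α L)
    (hR : aR code r α L b) : aF code q r α p = some b := by
  have hex : ∃ c, ∃ L', aGood code q α L' ∧ p.val = aSgr code q α L' ∧ aR code r α L' c :=
    ⟨b, L, hL, hpv, hR⟩
  rw [aF, dif_pos hex]
  congr 1
  obtain ⟨L', h1, h2, h3⟩ := hex.choose_spec
  exact aR_node_unique hcode hqr h1 hL (by rw [← h2, hpv]) h3 hR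

theorem part1 (hcode : Function.Injective code) (hqr : q ≠ r)
    (Φ : (A → Option A) → Option A)
    (hα : ∀ (β : A → Option A) (b : A),
      Φ β = some b ↔ phiPRel code (fun x => code [q, x]) (fun x => code [r, x]) α β b) :
    ∀ (β : A → Option A) (b : A),
      Φ β = some b ↔ ∃ v, IsLeaf (aT code q α) v ∧ agreesP β v ∧ aF code q r α v = some b := by
  intro β b
  rw [hα β b]
  constructor
  · rintro ⟨L, hInt, hres⟩
    have hgood : aGood code q α L := by
      constructor
      · intro j hj
        obtain ⟨bq, h1, h2⟩ := hInt j hj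
        exact ⟨bq, h1⟩
      · intro i j a hi hj h1 h2
        obtain ⟨bi, hbi1, hbi2⟩ := hInt i hi
        obtain ⟨bj, hbj1, hbj2⟩ := hInt j hj
        have e1 : bi = a := aQ_unique hcode hbi1 h1
        have e2 : bj = a := aQ_unique hcode hbj1 h2
        rw [e1] at hbi2
        rw [e2] at hbj2
        rw [hbi2] at hbj2
        exact Option.some.inj hbj2
    have hR : aR code r α L b := hres
    refine ⟨⟨aSgr code q α L, aSgr_func hgood, aSgr_finite hcode⟩,
      result_leaf hcode hqr hgood hR rfl ⟨L, hgood, rfl⟩, ?_,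
      aF_eq_some_of hcode hqr hgood rfl hR⟩
    intro x y hxy
    obtain ⟨j, hj, hqj, hyj⟩ := hxy
    obtain ⟨bj, h1, h2⟩ := hInt j hj
    have e : bj = x := aQ_unique hcode h1 hqj
    rw [e] at h2
    have hyj' : y = L[j]'hj := hyj
    rw [hyj']
    exact h2
  · rintro ⟨v, hleaf, hag, hFv⟩
    obtain ⟨L, hL, hpv, hR⟩ := aF_eq_some hcode hqr hFv
    refine ⟨L, ?_, hR⟩
    intro j hj
    obtain ⟨a, ha⟩ := hL.1 j hj
    refine ⟨a, ha, ?_⟩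
    have hmem : (a, L[j]'hj) ∈ v.val := by
      rw [hpv]
      exact ⟨j, hj, ha, rfl⟩
    exact hag hmem

end Part1

end S14Aux
/-- A partial function `Ptl(A,A) ⇀ A` is of the form `φ_α`
for some partial `α` iff it is partial sequential in the generalized sense
(non-total sequential trees, partial `F` on leaves). -/
theorem statement14 {A : Type u} [Infinite A] (code : List A → A)
    (hcode : Function.Injective code) (q r : A) (hqr : q ≠ r)
    (Φ : (A → Option A) → Option A) :
    (∃ α : A → Option A, ∀ (β : A → Option A) (b : A),
        Φ β = some b ↔ phiPRel code (fun x => code [q, x]) (fun x => code [r, x]) α β b)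
    ↔ ∃ (T : Set (FPF A)) (F : FPF A → Option A), IsSeqTree T ∧
        ∀ (β : A → Option A) (b : A),
          Φ β = some b ↔ ∃ v, IsLeaf T v ∧ agreesP β v ∧ F v = some b := by
  constructor
  · rintro ⟨α, hα⟩
    exact ⟨aT code q α, aF code q r α, ⟨aT_tree hcode, aT_succ hcode⟩,
      part1 hcode hqr Φ hα⟩
  · rintro ⟨T, F, hT, hΦ⟩
    exact ⟨bAlpha code q r T F, part2 code q r T F hcode hqr hT Φ hΦ⟩

end OostenK2
end
end
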